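/- arXiv:2304.06050 — 8 statements merged into one kernel-verified Lean document; each statement's English description precedes it below -/
import Mathlib

section
/- Let n ≥ 1 and let A be an n×n complex matrix. Then the numerical range of A satisfies W(A) = ⋂_{θ ∈ [0,2π)} { μ ∈ ℂ : Re(e^{iθ} μ) ≤ λ₁(Re(e^{iθ}A)) }. Consequently, for any n×n complex matrix B, W(B) ⊆ W(A) if and only if λ₁(Re(e^{iθ}B)) ≤ λ₁(Re(e^{iθ}A)) for all θ ∈ [0,2π). -/
open Matrix BigOperators

/-- The cyclic shift matrix `S(a₁, …, aₙ)`. -/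
noncomputable def cyc {n : ℕ} (a : Fin n → ℂ) : Matrix (Fin n) (Fin n) ℂ :=
  Matrix.of fun i j => if (j : ℕ) = ((i : ℕ) + 1) % n then a i else 0

/-- The numerical range `W(A) = { x* A x : x*x = 1 }`. -/
def numRange {n : ℕ} (A : Matrix (Fin n) (Fin n) ℂ) : Set ℂ :=
  {z | ∃ x : Fin n → ℂ, star x ⬝ᵥ x = 1 ∧ z = star x ⬝ᵥ A.mulVec x}

/-- `Re(e^{iθ} A) = (e^{iθ}A + e^{-iθ}A*)/2`. -/
noncomputable def reT {n : ℕ} (θ : ℝ) (A : Matrix (Fin n) (Fin n) ℂ) :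
    Matrix (Fin n) (Fin n) ℂ :=
  ((1 : ℂ)/2) • (Complex.exp (θ * Complex.I) • A + Complex.exp (-(θ * Complex.I)) • Aᴴ)

/-- The largest (real) eigenvalue of a matrix. -/
noncomputable def maxEig {n : ℕ} (H : Matrix (Fin n) (Fin n) ℂ) : ℝ :=
  sSup {t : ℝ | ∃ v : Fin n → ℂ, v ≠ 0 ∧ H.mulVec v = (t : ℂ) • v}

open ComplexOrder

section Aux
variable {n : ℕ}

variable {H : Matrix (Fin n) (Fin n) ℂ}


lemma conj_expI (θ : ℝ) :
    starRingEnd ℂ (Complex.exp (θ * Complex.I)) = Complex.exp (-(θ * Complex.I)) := by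
  rw [← Complex.exp_conj]; congr 1; simp

lemma dot_conjT (A : Matrix (Fin n) (Fin n) ℂ) (x : Fin n → ℂ) :
    star x ⬝ᵥ (Aᴴ *ᵥ x) = starRingEnd ℂ (star x ⬝ᵥ (A *ᵥ x)) := by
  simp only [dotProduct, mulVec, Matrix.conjTranspose_apply, map_sum, _root_.map_mul,
    Finset.mul_sum]
  rw [Finset.sum_comm]
  apply Finset.sum_congr rfl; intro i _
  apply Finset.sum_congr rfl; intro j _
  simp only [Pi.star_apply, Complex.star_def, Complex.conj_conj]
  ring

lemma reT_isHermitian (θ : ℝ) (A : Matrix (Fin n) (Fin n) ℂ) : (reT θ A).IsHermitian := by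
  unfold reT
  unfold Matrix.IsHermitian
  rw [conjTranspose_smul, conjTranspose_add, conjTranspose_smul, conjTranspose_smul,
    conjTranspose_conjTranspose]
  rw [show (star ((1:ℂ)/2)) = (1:ℂ)/2 by norm_num]
  rw [show star (Complex.exp (θ * Complex.I)) = Complex.exp (-(θ * Complex.I)) from conj_expI θ]
  rw [show star (Complex.exp (-(θ * Complex.I))) = Complex.exp (θ * Complex.I) by
    rw [Complex.star_def, ← Complex.exp_conj]; congr 1; simp]
  rw [add_comm]

lemma dot_reT (θ : ℝ) (A : Matrix (Fin n) (Fin n) ℂ) (x : Fin n → ℂ) :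
    star x ⬝ᵥ ((reT θ A) *ᵥ x)
      = (((Complex.exp (θ * Complex.I) * (star x ⬝ᵥ (A *ᵥ x))).re : ℝ) : ℂ) := by
  unfold reT
  rw [smul_mulVec, add_mulVec, smul_mulVec, smul_mulVec,
    dotProduct_smul, dotProduct_add, dotProduct_smul, dotProduct_smul, dot_conjT]
  rw [smul_eq_mul, smul_eq_mul, smul_eq_mul, ← conj_expI θ, ← RingHom.map_mul]
  rw [Complex.add_conj]
  push_cast
  ring


lemma psd_sub (hH : H.IsHermitian) (M : ℝ) (hM : ∀ i, hH.eigenvalues i ≤ M) :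
    PosSemidef ((M : ℂ) • (1 : Matrix (Fin n) (Fin n) ℂ) - H) := by
  set V : Matrix (Fin n) (Fin n) ℂ := (hH.eigenvectorUnitary : Matrix (Fin n) (Fin n) ℂ) with hV
  have hVV : V * star V = 1 := (Matrix.mem_unitaryGroup_iff).mp hH.eigenvectorUnitary.2
  have key : (M : ℂ) • (1 : Matrix (Fin n) (Fin n) ℂ) - H
      = V * Matrix.diagonal (fun i => ((M - hH.eigenvalues i : ℝ) : ℂ)) * star V := by
    conv_lhs => rw [hH.spectral_theorem, Unitary.conjStarAlgAut_apply]
    have h1 : (M:ℂ) • (1 : Matrix (Fin n) (Fin n) ℂ) = V * ((M:ℂ) • 1) * star V := by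
      rw [Matrix.mul_smul, Matrix.mul_one, Matrix.smul_mul, hVV]
    rw [h1, ← hV, ← Matrix.sub_mul, ← Matrix.mul_sub, smul_one_eq_diagonal, diagonal_sub]
    congr 2
    funext i
    push_cast
    simp
  rw [key, Matrix.star_eq_conjTranspose]
  refine PosSemidef.mul_mul_conjTranspose_same ?_ V
  refine posSemidef_diagonal_iff.mpr fun i => ?_
  rw [Complex.le_def]
  constructor
  · simp [sub_nonneg, hM i]
  · simp

lemma rayleigh_le (hH : H.IsHermitian) (M : ℝ) (hM : ∀ i, hH.eigenvalues i ≤ M)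
    (x : Fin n → ℂ) : (star x ⬝ᵥ (H *ᵥ x)).re ≤ M * (star x ⬝ᵥ x).re := by
  have h := (psd_sub hH M hM).dotProduct_mulVec_nonneg x
  rw [Complex.le_def] at h
  rw [sub_mulVec, smul_mulVec, one_mulVec, dotProduct_sub, dotProduct_smul] at h
  obtain ⟨h1, -⟩ := h
  simp only [Complex.zero_re, Complex.sub_re, smul_eq_mul, Complex.mul_re, Complex.ofReal_re,
    Complex.ofReal_im, zero_mul, sub_zero] at h1
  linarith

lemma unit_eigvec (hH : H.IsHermitian) (i : Fin n) :
    star ⇑(hH.eigenvectorBasis i) ⬝ᵥ ⇑(hH.eigenvectorBasis i) = 1 := by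
  have h := (EuclideanSpace.inner_eq_star_dotProduct (hH.eigenvectorBasis i)
    (hH.eigenvectorBasis i)).symm
  have h2 : (inner ℂ (hH.eigenvectorBasis i) (hH.eigenvectorBasis i) : ℂ) = 1 := by
    rw [@inner_self_eq_norm_sq_to_K, hH.eigenvectorBasis.orthonormal.1 i]
    norm_num
  rw [dotProduct_comm, h, h2]

lemma mulVec_eigvec (hH : H.IsHermitian) (i : Fin n) :
    H *ᵥ ⇑(hH.eigenvectorBasis i) = ((hH.eigenvalues i : ℝ) : ℂ) • ⇑(hH.eigenvectorBasis i) := by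
  rw [hH.mulVec_eigenvectorBasis]
  funext j
  simp [Pi.smul_apply, Complex.real_smul]

lemma maxEig_spec (hn : 1 ≤ n) (hH : H.IsHermitian) :
    (∀ x : Fin n → ℂ, (star x ⬝ᵥ (H *ᵥ x)).re ≤ maxEig H * (star x ⬝ᵥ x).re) ∧
    (∃ x : Fin n → ℂ, star x ⬝ᵥ x = 1 ∧ star x ⬝ᵥ (H *ᵥ x) = ((maxEig H : ℝ) : ℂ)) := by
  have hne : (Finset.univ : Finset (Fin n)).Nonempty := by
    haveI : NeZero n := ⟨by omega⟩
    exact Finset.univ_nonempty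
  set M : ℝ := Finset.univ.sup' hne hH.eigenvalues with hMdef
  have hM : ∀ i, hH.eigenvalues i ≤ M := fun i => Finset.le_sup' _ (Finset.mem_univ i)
  obtain ⟨i₀, -, hi₀'⟩ := Finset.exists_mem_eq_sup' hne hH.eigenvalues
  have hi₀ : M = hH.eigenvalues i₀ := hi₀'
  set S : Set ℝ := {t : ℝ | ∃ v : Fin n → ℂ, v ≠ 0 ∧ H.mulVec v = (t : ℂ) • v} with hS
  have hMS : M ∈ S := by
    refine ⟨⇑(hH.eigenvectorBasis i₀), (WithLp.ofLp_eq_zero 2).ne.2 <| hH.eigenvectorBasis.orthonormal.ne_zero i₀, ?_⟩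
    rw [mulVec_eigvec hH i₀, hi₀]
  have hbdd : ∀ t ∈ S, t ≤ M := by
    rintro t ⟨v, hv, hveq⟩
    have hc := dotProduct_star_self_pos_iff.mpr hv
    rw [Complex.lt_def] at hc
    have hq : (star v ⬝ᵥ (H *ᵥ v)).re = t * (star v ⬝ᵥ v).re := by
      rw [hveq, dotProduct_smul]
      simp [Complex.mul_re, ← hc.2]
    have hb := rayleigh_le hH M hM v
    rw [hq] at hb
    have hcpos : 0 < (star v ⬝ᵥ v).re := by simpa using hc.1
    exact le_of_mul_le_mul_right hb hcpos
  have hsup : maxEig H = M := by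
    apply le_antisymm
    · exact csSup_le ⟨M, hMS⟩ hbdd
    · exact le_csSup ⟨M, hbdd⟩ hMS
  constructor
  · intro x
    rw [hsup]
    exact rayleigh_le hH M hM x
  · refine ⟨⇑(hH.eigenvectorBasis i₀), unit_eigvec hH i₀, ?_⟩
    rw [mulVec_eigvec hH i₀, dotProduct_smul, unit_eigvec hH i₀, hsup, hi₀]
    simp

variable (A : Matrix (Fin n) (Fin n) ℂ)


lemma continuous_quadform : Continuous (fun x : Fin n → ℂ => star x ⬝ᵥ (A *ᵥ x)) := by
  simp only [dotProduct, mulVec]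
  apply continuous_finset_sum
  intro i _
  exact ((continuous_apply i).star).mul
    (continuous_finset_sum _ fun j _ => continuous_const.mul (continuous_apply j))

lemma numRange_eq_image : numRange A =
    (fun y : EuclideanSpace ℂ (Fin n) => star ((WithLp.equiv 2 _) y) ⬝ᵥ (A *ᵥ (WithLp.equiv 2 _) y))
      '' (Metric.sphere (0 : EuclideanSpace ℂ (Fin n)) 1) := by
  ext z
  constructor
  · rintro ⟨x, hx, rfl⟩
    refine ⟨(WithLp.equiv 2 _).symm x, ?_, rfl⟩
    rw [mem_sphere_zero_iff_norm]
    have h : (inner ℂ ((WithLp.equiv 2 (Fin n → ℂ)).symm x) ((WithLp.equiv 2 (Fin n → ℂ)).symm x) : ℂ)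
        = star x ⬝ᵥ x := (EuclideanSpace.inner_eq_star_dotProduct _ _).trans (dotProduct_comm _ _)
    rw [hx, @inner_self_eq_norm_sq_to_K] at h
    have : ‖(WithLp.equiv 2 (Fin n → ℂ)).symm x‖^2 = (1:ℝ) := by
      have h2 : ((‖(WithLp.equiv 2 (Fin n → ℂ)).symm x‖^2 : ℝ) : ℂ) = 1 := by push_cast; exact h
      exact_mod_cast h2
    nlinarith [norm_nonneg ((WithLp.equiv 2 (Fin n → ℂ)).symm x)]
  · rintro ⟨y, hy, rfl⟩
    refine ⟨(WithLp.equiv 2 _) y, ?_, rfl⟩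
    rw [mem_sphere_zero_iff_norm] at hy
    have h : (inner ℂ y y : ℂ) = star ((WithLp.equiv 2 _) y) ⬝ᵥ ((WithLp.equiv 2 _) y) :=
      (EuclideanSpace.inner_eq_star_dotProduct y y).trans (dotProduct_comm _ _)
    rw [@inner_self_eq_norm_sq_to_K, hy] at h
    simpa using h.symm

lemma isCompact_numRange : IsCompact (numRange A) := by
  rw [numRange_eq_image]
  apply (isCompact_sphere _ _).image
  exact (continuous_quadform A).comp (PiLp.continuous_ofLp 2 _)

lemma isClosed_numRange : IsClosed (numRange A) := (isCompact_numRange A).isClosed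


lemma quad_smul_add (a b : ℂ) (u v : Fin n → ℂ) :
    star (a • u + b • v) ⬝ᵥ (A *ᵥ (a • u + b • v))
      = (starRingEnd ℂ a) * a * (star u ⬝ᵥ (A *ᵥ u))
        + (starRingEnd ℂ b) * b * (star v ⬝ᵥ (A *ᵥ v))
        + (starRingEnd ℂ a) * b * (star u ⬝ᵥ (A *ᵥ v))
        + (starRingEnd ℂ b) * a * (star v ⬝ᵥ (A *ᵥ u)) := by
  simp only [star_add, star_smul, mulVec_add, mulVec_smul, add_dotProduct, dotProduct_add,
    smul_dotProduct, dotProduct_smul, smul_eq_mul, Complex.star_def, RCLike.star_def]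
  ring

lemma dot_smul_add (a b : ℂ) (u v : Fin n → ℂ) :
    star (a • u + b • v) ⬝ᵥ (a • u + b • v)
      = (starRingEnd ℂ a) * a * (star u ⬝ᵥ u) + (starRingEnd ℂ b) * b * (star v ⬝ᵥ v)
        + (starRingEnd ℂ a) * b * (star u ⬝ᵥ v) + (starRingEnd ℂ b) * a * (star v ⬝ᵥ u) := by
  simp only [star_add, star_smul, add_dotProduct, dotProduct_add,
    smul_dotProduct, dotProduct_smul, smul_eq_mul, Complex.star_def, RCLike.star_def]
  ring

lemma icc_subset_numRange (x y : Fin n → ℂ) (hxu : star x ⬝ᵥ x = 1) (hyu : star y ⬝ᵥ y = 1)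
    (hx0 : star x ⬝ᵥ (A *ᵥ x) = 0) (hy1 : star y ⬝ᵥ (A *ᵥ y) = 1)
    {s : ℝ} (hs : s ∈ Set.Icc (0:ℝ) 1) : (s : ℂ) ∈ numRange A := by
  classical
  set u : ℂ := star x ⬝ᵥ (A *ᵥ y) with hu
  set w : ℂ := star y ⬝ᵥ (A *ᵥ x) with hw
  -- choose phase φ
  set F : ℝ → ℝ := fun φ =>
    (Complex.exp (-(↑φ * Complex.I)) * u + Complex.exp (↑φ * Complex.I) * w).im with hF
  have hFcont : Continuous F := by fun_prop
  have hFpi : F Real.pi = -F 0 := by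
    simp only [hF]
    rw [show -((Real.pi : ℂ) * Complex.I) = -(Real.pi * Complex.I) by push_cast; ring]
    rw [show ((Real.pi : ℂ) * Complex.I) = (Real.pi * Complex.I) by push_cast; ring]
    rw [show Complex.exp (-(Real.pi * Complex.I)) = -1 by
      rw [Complex.exp_neg, Complex.exp_pi_mul_I]; norm_num]
    rw [Complex.exp_pi_mul_I]
    simp [Complex.add_im, Complex.neg_im]
    ring
  have hφ : ∃ φ : ℝ, F φ = 0 := by
    rcases le_total (F 0) 0 with h | h
    · have h0 : (0:ℝ) ∈ Set.Icc (F 0) (F Real.pi) := ⟨h, by rw [hFpi]; linarith⟩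
      obtain ⟨φ, -, hφ⟩ := intermediate_value_Icc Real.pi_pos.le hFcont.continuousOn h0
      exact ⟨φ, hφ⟩
    · have h0 : (0:ℝ) ∈ Set.Icc (F Real.pi) (F 0) := ⟨by rw [hFpi]; linarith, h⟩
      obtain ⟨φ, -, hφ⟩ := intermediate_value_Icc' Real.pi_pos.le hFcont.continuousOn h0
      exact ⟨φ, hφ⟩
  obtain ⟨φ, hφ0⟩ := hφ
  set e : ℂ := Complex.exp (↑φ * Complex.I) with he
  have hce : starRingEnd ℂ e = Complex.exp (-(↑φ * Complex.I)) := by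
    rw [he, ← Complex.exp_conj]; congr 1; simp
  have hee : starRingEnd ℂ e * e = 1 := by
    rw [hce, ← Complex.exp_add]; simp
  set x' : Fin n → ℂ := e • x with hx'
  have hx'u : star x' ⬝ᵥ x' = 1 := by
    rw [hx', star_smul, smul_dotProduct, dotProduct_smul, smul_eq_mul, smul_eq_mul,
      ← mul_assoc, Complex.star_def, hee, one_mul, hxu]
  have hx'0 : star x' ⬝ᵥ (A *ᵥ x') = 0 := by
    rw [hx', star_smul, mulVec_smul, smul_dotProduct, dotProduct_smul, smul_eq_mul, smul_eq_mul,
      ← mul_assoc, Complex.star_def, hee, one_mul, hx0]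
  set c : ℂ := star x' ⬝ᵥ (A *ᵥ y) + star y ⬝ᵥ (A *ᵥ x') with hc
  have hcim : c.im = 0 := by
    have h1 : star x' ⬝ᵥ (A *ᵥ y) = starRingEnd ℂ e * u := by
      rw [hx', star_smul, smul_dotProduct, smul_eq_mul, Complex.star_def, hu]
    have h2 : star y ⬝ᵥ (A *ᵥ x') = e * w := by
      rw [hx', mulVec_smul, dotProduct_smul, smul_eq_mul, hw]
    rw [hc, h1, h2, hce]
    exact hφ0
  set d : ℂ := star x' ⬝ᵥ y + star y ⬝ᵥ x' with hd
  have hdim : d.im = 0 := by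
    have : star x' ⬝ᵥ y = star (star y ⬝ᵥ x') := star_dotProduct x' y
    rw [hd, this, Complex.star_def]
    simp [Complex.add_im]
  have hcre : ((c.re : ℝ) : ℂ) = c := by rw [← Complex.re_add_im c, hcim]; simp
  have hdre : ((d.re : ℝ) : ℂ) = d := by rw [← Complex.re_add_im d, hdim]; simp
  set z : ℝ → (Fin n → ℂ) := fun t => ((Real.cos t : ℂ)) • x' + ((Real.sin t : ℂ)) • y with hz
  have hqG : ∀ t, star (z t) ⬝ᵥ (A *ᵥ z t)
      = ((Real.sin t ^ 2 + Real.cos t * Real.sin t * c.re : ℝ) : ℂ) := by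
    intro t
    have h1 : ((Real.sin t ^ 2 + Real.cos t * Real.sin t * c.re : ℝ) : ℂ)
        = (Real.sin t : ℂ)^2 + (Real.cos t : ℂ) * (Real.sin t : ℂ) * c := by
      simp only [Complex.ofReal_add, Complex.ofReal_mul, Complex.ofReal_pow]
      rw [hcre]
    rw [h1, hz, quad_smul_add, hx'0, hy1, hc]
    simp only [Complex.conj_ofReal]
    ring
  have hND : ∀ t, star (z t) ⬝ᵥ (z t)
      = ((1 + Real.cos t * Real.sin t * d.re : ℝ) : ℂ) := by
    intro t
    have h1 : ((1 + Real.cos t * Real.sin t * d.re : ℝ) : ℂ)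
        = 1 + (Real.cos t : ℂ) * (Real.sin t : ℂ) * d := by
      simp only [Complex.ofReal_add, Complex.ofReal_mul, Complex.ofReal_one]
      rw [hdre]
    have hcs : (Real.cos t : ℂ)^2 + (Real.sin t : ℂ)^2 = 1 := by
      rw [show ((Real.cos t:ℂ)^2 + (Real.sin t:ℂ)^2)
          = ((Real.cos t^2 + Real.sin t^2 : ℝ) : ℂ) by
        simp only [Complex.ofReal_add, Complex.ofReal_pow]]
      rw [show (Real.cos t^2 + Real.sin t^2 : ℝ) = 1 by
        have := Real.sin_sq_add_cos_sq t; linarith]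
      norm_num
    rw [h1, hz, dot_smul_add, hx'u, hyu, hd]
    simp only [Complex.conj_ofReal]
    linear_combination hcs
  have hz0 : ∀ t, z t ≠ 0 := by
    intro t h0
    simp only [hz] at h0
    rcases eq_or_ne (Real.sin t) 0 with hsin | hsin
    · have hcos : (Real.cos t : ℂ) ≠ 0 := by
        have h2 := Real.sin_sq_add_cos_sq t
        rw [hsin] at h2
        refine Complex.ofReal_ne_zero.mpr fun hc => ?_
        rw [hc] at h2; norm_num at h2
      have hx'z : x' = 0 := by
        have h3 : (Real.cos t : ℂ) • x' = 0 := by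
          have := h0
          rw [hsin] at this
          simpa using this
        exact (smul_eq_zero.mp h3).resolve_left hcos
      rw [hx'z] at hx'u
      simp at hx'u
    · have hsinC : (Real.sin t : ℂ) ≠ 0 := Complex.ofReal_ne_zero.mpr hsin
      have h4 : (Real.sin t : ℂ) • y = -((Real.cos t : ℂ) • x') :=
        eq_neg_of_add_eq_zero_right h0
      have hyx : y = ((Real.sin t : ℂ)⁻¹ * -(Real.cos t : ℂ)) • x' := by
        calc y = (Real.sin t : ℂ)⁻¹ • ((Real.sin t : ℂ) • y) := by
              rw [smul_smul, inv_mul_cancel₀ hsinC, one_smul]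
        _ = ((Real.sin t : ℂ)⁻¹ * -(Real.cos t : ℂ)) • x' := by
              rw [h4]; module
      rw [hyx, star_smul, mulVec_smul, smul_dotProduct, dotProduct_smul, hx'0] at hy1
      simp at hy1
  have hDpos : ∀ t, 0 < 1 + Real.cos t * Real.sin t * d.re := by
    intro t
    have hpos := dotProduct_star_self_pos_iff.mpr (hz0 t)
    rw [Complex.lt_def] at hpos
    have h1 := hpos.1
    rw [hND t] at h1
    simpa [Complex.cos_ofReal_re, Complex.sin_ofReal_re] using h1
  set g : ℝ → ℝ := fun t =>
    (Real.sin t ^ 2 + Real.cos t * Real.sin t * c.re)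
      / (1 + Real.cos t * Real.sin t * d.re) with hg
  have hgcont : Continuous g := by
    apply Continuous.div (by fun_prop) (by fun_prop)
    exact fun t => (hDpos t).ne'
  have hg0 : g 0 = 0 := by simp [hg]
  have hgpi : g (Real.pi/2) = 1 := by
    simp [hg, Real.sin_pi_div_two, Real.cos_pi_div_two]
  have hsmem : s ∈ Set.Icc (g 0) (g (Real.pi/2)) := by rw [hg0, hgpi]; exact hs
  obtain ⟨t, -, hgt⟩ := intermediate_value_Icc (by positivity) hgcont.continuousOn hsmem
  set r : ℝ := Real.sqrt (1 + Real.cos t * Real.sin t * d.re) with hr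
  have hrpos : 0 < r := Real.sqrt_pos.mpr (hDpos t)
  have hrsq : r * r = 1 + Real.cos t * Real.sin t * d.re :=
    Real.mul_self_sqrt (hDpos t).le
  refine ⟨((r⁻¹ : ℝ) : ℂ) • z t, ?_, ?_⟩
  · rw [star_smul, smul_dotProduct, dotProduct_smul, hND t, Complex.star_def,
      Complex.conj_ofReal, smul_eq_mul, smul_eq_mul, ← Complex.ofReal_mul, ← Complex.ofReal_mul]
    rw [show (r⁻¹ * (r⁻¹ * (1 + Real.cos t * Real.sin t * d.re)) : ℝ) = 1 by
      rw [← hrsq]; field_simp]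
    norm_num
  · rw [star_smul, mulVec_smul, smul_dotProduct, dotProduct_smul, hqG t, Complex.star_def,
      Complex.conj_ofReal, smul_eq_mul, smul_eq_mul, ← Complex.ofReal_mul, ← Complex.ofReal_mul]
    have hgt' : (Real.sin t ^ 2 + Real.cos t * Real.sin t * c.re)
        / (1 + Real.cos t * Real.sin t * d.re) = s := by simpa [hg] using hgt
    rw [show (r⁻¹ * (r⁻¹ * (Real.sin t ^ 2 + Real.cos t * Real.sin t * c.re)) : ℝ) = s by
      rw [← hgt', ← hrsq]
      field_simp]

lemma quad_affine (α β : ℂ) (x : Fin n → ℂ) (hx : star x ⬝ᵥ x = 1) :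
    star x ⬝ᵥ ((α • A + β • (1 : Matrix (Fin n) (Fin n) ℂ)) *ᵥ x)
      = α * (star x ⬝ᵥ (A *ᵥ x)) + β := by
  rw [add_mulVec, smul_mulVec, smul_mulVec, one_mulVec, dotProduct_add,
    dotProduct_smul, dotProduct_smul, smul_eq_mul, smul_eq_mul, hx, mul_one]

lemma convex_numRange : Convex ℝ (numRange A) := by
  intro p hp q hq a b ha hb hab
  by_cases hpq : p = q
  · subst hpq
    have h : a • p + b • p = p := by rw [← add_smul, hab, one_smul]
    rw [h]; exact hq
  have hqp : q - p ≠ 0 := sub_ne_zero.mpr (Ne.symm hpq)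
  obtain ⟨xp, hxp, hxpv⟩ := hp
  obtain ⟨xq, hxq, hxqv⟩ := hq
  set A' := ((q-p)⁻¹ : ℂ) • A + (-p * (q-p)⁻¹) • (1 : Matrix (Fin n) (Fin n) ℂ) with hA'
  have h0 : star xp ⬝ᵥ (A' *ᵥ xp) = 0 := by
    rw [hA', quad_affine A _ _ xp hxp, ← hxpv]
    field_simp
    ring
  have h1 : star xq ⬝ᵥ (A' *ᵥ xq) = 1 := by
    rw [hA', quad_affine A _ _ xq hxq, ← hxqv]
    field_simp
    ring
  have hb1 : b ∈ Set.Icc (0:ℝ) 1 := ⟨hb, by linarith⟩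
  obtain ⟨v, hv, hvv⟩ := icc_subset_numRange A' xp xq hxp hxq h0 h1 hb1
  have hval : star v ⬝ᵥ (A' *ᵥ v) = ((q-p)⁻¹ : ℂ) * (star v ⬝ᵥ (A *ᵥ v)) + (-p * (q-p)⁻¹) :=
    quad_affine A _ _ v hv
  have h2 : (b:ℂ) = ((q-p)⁻¹ : ℂ) * (star v ⬝ᵥ (A *ᵥ v)) + (-p * (q-p)⁻¹) := hvv.trans hval
  have hw : star v ⬝ᵥ (A *ᵥ v) = (a:ℂ) * p + (b:ℂ) * q := by
    have hac : (a:ℂ) = 1 - (b:ℂ) := by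
      have : a = 1 - b := by linarith
      rw [this]; push_cast; ring_nf
    field_simp at h2
    rw [hac]
    linear_combination -h2
  refine ⟨v, hv, ?_⟩
  rw [Complex.real_smul, Complex.real_smul, hw]

lemma numRange_nonempty (hn : 1 ≤ n) : (numRange A).Nonempty := by
  have hi : (0:ℕ) < n := hn
  set x : Fin n → ℂ := Pi.single ⟨0, hi⟩ 1 with hx
  have hxu : star x ⬝ᵥ x = 1 := by
    simp [hx, dotProduct, Pi.single_apply, Finset.sum_ite_eq]
  exact ⟨star x ⬝ᵥ (A *ᵥ x), x, hxu, rfl⟩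

lemma halfplane_forward (hn : 1 ≤ n) (θ : ℝ) {z : ℂ} (hz : z ∈ numRange A) :
    (Complex.exp (θ * Complex.I) * z).re ≤ maxEig (reT θ A) := by
  obtain ⟨x, hxu, rfl⟩ := hz
  have h1 := (maxEig_spec hn (reT_isHermitian θ A)).1 x
  rw [dot_reT, hxu] at h1
  simpa [Complex.cos_ofReal_re, Complex.sin_ofReal_re] using h1

lemma halfplane_attained (hn : 1 ≤ n) (θ : ℝ) :
    ∃ z ∈ numRange A, (Complex.exp (θ * Complex.I) * z).re = maxEig (reT θ A) := by
  obtain ⟨x, hxu, hxe⟩ := (maxEig_spec hn (reT_isHermitian θ A)).2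
  refine ⟨star x ⬝ᵥ (A *ᵥ x), ⟨x, hxu, rfl⟩, ?_⟩
  rw [dot_reT] at hxe
  exact_mod_cast hxe

lemma numRange_eq_iInter (hn : 1 ≤ n) :
    numRange A =
      ⋂ θ ∈ Set.Ico (0 : ℝ) (2 * Real.pi),
        {μ : ℂ | (Complex.exp (θ * Complex.I) * μ).re ≤ maxEig (reT θ A)} := by
  apply Set.Subset.antisymm
  · intro z hz
    rw [Set.mem_iInter₂]
    intro θ _
    exact halfplane_forward A hn θ hz
  · intro μ hμ
    rw [Set.mem_iInter₂] at hμ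
    by_contra hμW
    obtain ⟨f, u, hfa, hfμ⟩ :=
      geometric_hahn_banach_closed_point (convex_numRange A) (isClosed_numRange A) hμW
    set w : ℂ := ((f 1 : ℝ) : ℂ) - ((f Complex.I : ℝ) : ℂ) * Complex.I with hwdef
    have hfrep : ∀ z : ℂ, f z = (w * z).re := by
      intro z
      have hz : z = (z.re : ℝ) • (1:ℂ) + (z.im : ℝ) • Complex.I := by
        simp only [Complex.real_smul, smul_eq_mul, mul_one]
        exact (Complex.re_add_im z).symm
      have h1 : f z = z.re * f 1 + z.im * f Complex.I := by
        conv_lhs => rw [hz]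
        rw [map_add, f.map_smul, f.map_smul]
        simp [smul_eq_mul]
      rw [h1, hwdef]
      simp [Complex.mul_re, Complex.sub_re, Complex.sub_im, Complex.mul_im]
      ring
    have hw0 : w ≠ 0 := by
      intro h
      obtain ⟨z0, hz0⟩ := numRange_nonempty A hn
      have h1 : f μ = 0 := by rw [hfrep, h, zero_mul]; simp
      have h2 : f z0 = 0 := by rw [hfrep, h, zero_mul]; simp
      have := hfa z0 hz0
      rw [h2] at this
      rw [h1] at hfμ
      linarith
    set r : ℝ := ‖w‖ with hrdef
    have hrpos : 0 < r := by
      rw [hrdef]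
      exact (norm_pos_iff.mpr hw0)
    set θ₀ : ℝ := Complex.arg w with hθ₀
    have hwexp : (r : ℂ) * Complex.exp (θ₀ * Complex.I) = w := Complex.norm_mul_exp_arg_mul_I w
    have hfrep2 : ∀ z : ℂ, f z = r * (Complex.exp (θ₀ * Complex.I) * z).re := by
      intro z
      rw [hfrep, ← hwexp, mul_assoc]
      simp [Complex.mul_re]
    set θ : ℝ := if 0 ≤ θ₀ then θ₀ else θ₀ + 2 * Real.pi with hθdef
    have hpi := Real.pi_pos
    have harg1 := Complex.arg_le_pi w
    have harg2 := Complex.neg_pi_lt_arg w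
    have hθIco : θ ∈ Set.Ico (0:ℝ) (2 * Real.pi) := by
      rw [hθdef]
      split_ifs with h
      · exact ⟨h, by linarith⟩
      · push_neg at h
        exact ⟨by linarith, by linarith⟩
    have hexpθ : Complex.exp (θ * Complex.I) = Complex.exp (θ₀ * Complex.I) := by
      rw [hθdef]
      split_ifs with h
      · rfl
      · have : ((θ₀ + 2 * Real.pi : ℝ) : ℂ) * Complex.I
            = θ₀ * Complex.I + 2 * Real.pi * Complex.I := by push_cast; ring
        rw [this, Complex.exp_add, Complex.exp_two_pi_mul_I, mul_one]
    obtain ⟨z0, hz0W, hz0eq⟩ := halfplane_attained A hn θ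
    have hμθ := hμ θ hθIco
    rw [Set.mem_setOf_eq] at hμθ
    have hlt := hfa z0 hz0W
    have h3 : f z0 < f μ := lt_trans hlt hfμ
    rw [hfrep2, hfrep2] at h3
    have h4 : (Complex.exp (θ₀ * Complex.I) * z0).re
        < (Complex.exp (θ₀ * Complex.I) * μ).re := by
      exact lt_of_mul_lt_mul_left h3 hrpos.le
    rw [← hexpθ] at h4
    rw [hz0eq] at h4
    linarith

end Aux

theorem stmt0 {n : ℕ} (hn : 1 ≤ n) (A : Matrix (Fin n) (Fin n) ℂ) :
    (numRange A =
      ⋂ θ ∈ Set.Ico (0 : ℝ) (2 * Real.pi),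
        {μ : ℂ | (Complex.exp (θ * Complex.I) * μ).re ≤ maxEig (reT θ A)}) ∧
    (∀ B : Matrix (Fin n) (Fin n) ℂ,
      numRange B ⊆ numRange A ↔
        ∀ θ ∈ Set.Ico (0 : ℝ) (2 * Real.pi), maxEig (reT θ B) ≤ maxEig (reT θ A)) := by
  constructor
  · exact numRange_eq_iInter A hn
  · intro B
    constructor
    · intro hsub θ _
      obtain ⟨x, hxu, hxe⟩ := (maxEig_spec hn (reT_isHermitian θ B)).2
      have hz : star x ⬝ᵥ (B *ᵥ x) ∈ numRange B := ⟨x, hxu, rfl⟩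
      have heq : maxEig (reT θ B)
          = (Complex.exp (θ * Complex.I) * (star x ⬝ᵥ (B *ᵥ x))).re := by
        rw [dot_reT] at hxe
        exact_mod_cast hxe.symm
      rw [heq]
      exact halfplane_forward A hn θ (hsub hz)
    · intro hle z hzB
      rw [numRange_eq_iInter A hn, Set.mem_iInter₂]
      intro θ hθ
      exact le_trans (halfplane_forward B hn θ hzB) (hle θ hθ)
end

section
/- Let n ≥ 2, let a₁, …, aₙ be real numbers with aⱼ > 0 for all j, let A = S(a₁, …, aₙ), and fix θ ∈ [0, 2π). Then every eigenvalue of the Hermitian matrix Re(e^{iθ}A) has multiplicity at most 2 (equivalently, the kernel of λI − Re(e^{iθ}A) has dimension at most 2 for every real λ). -/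
open Matrix BigOperators

/-- The three-term recurrence satisfied by rows of `μI - Re(e^{iθ} S(a))`. -/
lemma row_eq {n : ℕ} (hn : 2 ≤ n) (a : Fin n → ℝ) (θ μ : ℝ) (v : Fin n → ℂ) (i : Fin n) :
    haveI : NeZero n := ⟨by omega⟩
    (((μ:ℂ) • (1 : Matrix (Fin n) (Fin n) ℂ) - reT θ (cyc fun j => (a j:ℂ))).mulVec v) i
      = μ * v i - (1/2) * Complex.exp (θ*Complex.I) * a i * v (i+1)
        - (1/2) * Complex.exp (-(θ*Complex.I)) * a (i-1) * v (i-1) := by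
  haveI : NeZero n := ⟨by omega⟩
  have h1n : 1 % n = 1 := Nat.mod_eq_of_lt (by omega)
  have hadd : ∀ j : Fin n, ((j+1 : Fin n) : ℕ) = ((j:ℕ) + 1) % n := by
    intro j; simp [Fin.add_def, Fin.val_one', h1n]
  have hcond1 : ∀ j : Fin n, ((j:ℕ) = ((i:ℕ)+1) % n) ↔ j = i + 1 := by
    intro j; rw [← hadd i, Fin.val_eq_val]
  have hcond2 : ∀ j : Fin n, ((i:ℕ) = ((j:ℕ)+1) % n) ↔ j = i - 1 := by
    intro j; rw [← hadd j, eq_comm, Fin.val_eq_val, eq_sub_iff_add_eq]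
  simp only [mulVec, dotProduct, Matrix.sub_apply, Matrix.smul_apply, Matrix.one_apply,
    reT, Matrix.add_apply, Matrix.conjTranspose_apply, cyc, Matrix.of_apply, hcond1, hcond2,
    smul_eq_mul]
  simp only [apply_ite (star : ℂ → ℂ), star_zero, Complex.star_def, Complex.conj_ofReal,
    sub_mul, add_mul, mul_ite, ite_mul, zero_mul, mul_zero, mul_one,
    Finset.sum_sub_distrib, Finset.sum_add_distrib, Finset.sum_ite_eq, Finset.sum_ite_eq',
    Finset.mem_univ, if_true]
  simp only [mul_add, add_mul, ite_mul, mul_ite, zero_mul, mul_zero,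
    Finset.sum_add_distrib, Finset.sum_ite_eq', Finset.mem_univ, if_true]
  ring

/-- Every eigenvalue of `Re(e^{iθ} S(a))` has multiplicity at most `2`:
the kernel of `μI - Re(e^{iθ}A)` has dimension at most `2` for every real `μ`. -/
theorem stmt1 {n : ℕ} (hn : 2 ≤ n) (a : Fin n → ℝ) (ha : ∀ j, 0 < a j)
    (θ : ℝ) (hθ : θ ∈ Set.Ico (0 : ℝ) (2 * Real.pi)) (μ : ℝ) :
    Module.finrank ℂ
      (LinearMap.ker (Matrix.toLin'
        ((μ : ℂ) • (1 : Matrix (Fin n) (Fin n) ℂ) - reT θ (cyc fun j => (a j : ℂ))))) ≤ 2 := by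
  haveI : NeZero n := ⟨by omega⟩
  set M : Matrix (Fin n) (Fin n) ℂ :=
    (μ : ℂ) • (1 : Matrix (Fin n) (Fin n) ℂ) - reT θ (cyc fun j => (a j : ℂ)) with hM
  let f : (Fin n → ℂ) →ₗ[ℂ] (Fin 2 → ℂ) :=
    LinearMap.pi (fun t => LinearMap.proj (⟨(t : ℕ), by omega⟩ : Fin n))
  let g := f.comp (LinearMap.ker (Matrix.toLin' M)).subtype
  have hg : Function.Injective g := by
    rw [← LinearMap.ker_eq_bot, LinearMap.ker_eq_bot']
    rintro ⟨v, hv⟩ h0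
    have hv' : M.mulVec v = 0 := by
      have := LinearMap.mem_ker.mp hv
      rwa [Matrix.toLin'_apply] at this
    have h0' : ∀ t : Fin 2, v ⟨(t : ℕ), by omega⟩ = 0 := by
      intro t
      have := congrFun h0 t
      simpa [g, f] using this
    have key : ∀ k : ℕ, ∀ hk : k < n, v ⟨k, hk⟩ = 0 := by
      intro k
      induction k using Nat.strong_induction_on with
      | _ k ih =>
        intro hk
        match k, hk with
        | 0, hk => exact h0' 0
        | 1, hk => exact h0' 1
        | (m+2), hk =>
          set i : Fin n := ⟨m+1, by omega⟩ with hi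
          have hrow := row_eq hn a θ μ v i
          rw [hv'] at hrow
          have hip : i + 1 = ⟨m+2, hk⟩ := by
            rw [Fin.ext_iff, Fin.add_def, Fin.val_one']
            simp only [Fin.val_mk]
            have h1 : 1 % n = 1 := Nat.mod_eq_of_lt (by omega)
            rw [h1]
            exact Nat.mod_eq_of_lt hk
          have him : i - 1 = ⟨m, by omega⟩ := by
            rw [Fin.ext_iff, Fin.sub_def, Fin.val_one']
            simp only [Fin.val_mk]
            have h1 : 1 % n = 1 := Nat.mod_eq_of_lt (by omega)
            rw [h1]
            have : n - 1 + (m + 1) = n + m := by omega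
            rw [this, Nat.add_mod_left]
            exact Nat.mod_eq_of_lt (by omega)
          rw [hip, him] at hrow
          have hvi : v i = 0 := ih (m+1) (by omega) (by omega)
          have hvm : v ⟨m, by omega⟩ = 0 := ih m (by omega) (by omega)
          rw [hvi, hvm] at hrow
          have hc : ((1:ℂ)/2) * Complex.exp (θ*Complex.I) * (a i : ℂ) ≠ 0 := by
            apply mul_ne_zero (mul_ne_zero (by norm_num) (Complex.exp_ne_zero _))
            exact_mod_cast (ha i).ne'
          have : ((1:ℂ)/2) * Complex.exp (θ*Complex.I) * (a i : ℂ) * v ⟨m+2, hk⟩ = 0 := by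
            have := hrow.symm
            simpa using this
          exact (mul_eq_zero.mp this).resolve_left hc
    apply Subtype.ext
    funext j
    have := key j.val j.isLt
    simpa using this
  calc Module.finrank ℂ (LinearMap.ker (Matrix.toLin' M))
      ≤ Module.finrank ℂ (Fin 2 → ℂ) := LinearMap.finrank_le_finrank_of_injective hg
    _ = 2 := by simp
end

section
/- Let n = 2k be even with k ≥ 1, let a₁, …, aₙ be real numbers with aⱼ > 0 for all j, and let A = S(a₁, …, aₙ). Then for every θ ∈ ℝ and every z ∈ ℂ, det(zI − 2·Re(e^{iθ}A)) = det(zI − (iA − iA*)) + (−1)^k · 2·∏_{j=1}^n aⱼ − 2·(∏_{j=1}^n aⱼ)·cos(nθ). -/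
open Matrix BigOperators

namespace StmtAux

variable {m : ℕ}

noncomputable def Bm (a : Fin (m+1) → ℝ) (z : ℂ) : Matrix (Fin (m+1)) (Fin (m+1)) ℂ :=
  Matrix.of fun i j =>
    (if i = j then z else 0) - (if (j : ℕ) = (i : ℕ) + 1 then (a i : ℂ) else 0)
      - (if (i : ℕ) = (j : ℕ) + 1 then (a j : ℂ) else 0)

noncomputable def Nm (a : Fin (m+1) → ℝ) (z u v : ℂ) : Matrix (Fin (m+1)) (Fin (m+1)) ℂ :=
  Matrix.of fun i j =>
    Bm a z i j - u * (if i = Fin.last m ∧ j = 0 then (a (Fin.last m) : ℂ) else 0)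
      - v * (if i = 0 ∧ j = Fin.last m then (a (Fin.last m) : ℂ) else 0)

noncomputable def clv (a : Fin (m+1) → ℝ) : Fin (m+1) → ℂ :=
  fun j => if j = 0 then (a (Fin.last m) : ℂ) else 0

noncomputable def cuv (a : Fin (m+1) → ℝ) : Fin (m+1) → ℂ :=
  fun j => if j = Fin.last m then (a (Fin.last m) : ℂ) else 0

lemma conj_det (a : Fin (m+1) → ℝ) (z w : ℂ) (hw : w ≠ 0) :
    (z • (1 : Matrix (Fin (m+1)) (Fin (m+1)) ℂ)
        - (w • cyc (fun j => (a j : ℂ)) + w⁻¹ • (cyc fun j => (a j : ℂ))ᴴ)).det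
      = (Nm a z (w ^ (m+1)) ((w ^ (m+1))⁻¹)).det := by
  set D : Matrix (Fin (m+1)) (Fin (m+1)) ℂ := Matrix.diagonal (fun i => w ^ (i : ℕ)) with hD
  have hDdet : D.det ≠ 0 := by
    rw [hD, Matrix.det_diagonal]
    exact Finset.prod_ne_zero_iff.mpr fun i _ => pow_ne_zero _ hw
  have key : D * (z • (1 : Matrix (Fin (m+1)) (Fin (m+1)) ℂ)
        - (w • cyc (fun j => (a j : ℂ)) + w⁻¹ • (cyc fun j => (a j : ℂ))ᴴ))
      = Nm a z (w ^ (m+1)) ((w ^ (m+1))⁻¹) * D := by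
    ext i j
    rw [hD, Matrix.diagonal_mul, Matrix.mul_diagonal]
    simp only [Nm, Bm, cyc, Matrix.sub_apply, Matrix.add_apply, Matrix.smul_apply,
      Matrix.one_apply, Matrix.conjTranspose_apply, Matrix.of_apply, smul_eq_mul,
      apply_ite (star : ℂ → ℂ), star_zero, Complex.star_def, Complex.conj_ofReal,
      mul_one, mul_zero]
    rw [show (if i = j then z else (0:ℂ)) = z * (if i = j then 1 else 0) from by
      split_ifs <;> ring]
    have hz : w ^ (i : ℕ) * (z * (if i = j then (1:ℂ) else 0))
        = z * (if i = j then (1:ℂ) else 0) * w ^ (j : ℕ) := by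
      split_ifs with h
      · rw [h]; ring
      · ring
    have hsup : w ^ (i : ℕ) * (w * (if (j : ℕ) = ((i : ℕ) + 1) % (m+1) then (a i : ℂ) else 0))
        = ((if (j : ℕ) = (i : ℕ) + 1 then (a i : ℂ) else 0)
            + w ^ (m+1) * (if i = Fin.last m ∧ j = 0 then (a (Fin.last m) : ℂ) else 0))
            * w ^ (j : ℕ) := by
      rcases Nat.lt_succ_iff_lt_or_eq.mp i.isLt with hi | hi
      · have hmod : ((i : ℕ) + 1) % (m+1) = (i : ℕ) + 1 := Nat.mod_eq_of_lt (by omega)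
        have hne : ¬(i = Fin.last m ∧ j = 0) := by
          rintro ⟨h1, -⟩; rw [Fin.ext_iff, Fin.val_last] at h1; omega
        rw [hmod, if_neg hne]
        rcases eq_or_ne ((j : ℕ)) ((i : ℕ) + 1) with h | h
        · rw [if_pos h, h, pow_succ]; ring
        · rw [if_neg h]; ring
      · have hil : i = Fin.last m := by rw [Fin.ext_iff, Fin.val_last]; exact hi
        rw [hil]
        simp only [Fin.val_last, Nat.mod_self]
        have hne : (j : ℕ) ≠ m + 1 := by have := j.isLt; omega
        rw [if_neg hne]
        simp only [true_and]
        rcases eq_or_ne j 0 with rfl | hj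
        · simp only [Fin.val_zero, pow_zero, mul_one, zero_add, if_true,
            eq_self_iff_true]
          rw [pow_succ]; ring
        · rw [if_neg (fun h => hj (Fin.ext (by rw [h, Fin.val_zero])) : ¬(j : ℕ) = 0), if_neg hj]; ring
    have hlow : w ^ (i : ℕ) * (w⁻¹ * (if (i : ℕ) = ((j : ℕ) + 1) % (m+1) then (a j : ℂ) else 0))
        = ((if (i : ℕ) = (j : ℕ) + 1 then (a j : ℂ) else 0)
            + (w ^ (m+1))⁻¹ * (if i = 0 ∧ j = Fin.last m then (a (Fin.last m) : ℂ) else 0))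
            * w ^ (j : ℕ) := by
      rcases Nat.lt_succ_iff_lt_or_eq.mp j.isLt with hj | hj
      · have hmod : ((j : ℕ) + 1) % (m+1) = (j : ℕ) + 1 := Nat.mod_eq_of_lt (by omega)
        have hne : ¬(i = 0 ∧ j = Fin.last m) := by
          rintro ⟨-, h2⟩; rw [Fin.ext_iff, Fin.val_last] at h2; omega
        rw [hmod, if_neg hne]
        rcases eq_or_ne ((i : ℕ)) ((j : ℕ) + 1) with h | h
        · rw [if_pos h, h, pow_succ]; field_simp; ring
        · rw [if_neg h]; ring
      · have hjl : j = Fin.last m := by rw [Fin.ext_iff, Fin.val_last]; exact hj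
        rw [hjl]
        simp only [Fin.val_last, Nat.mod_self]
        have hne : (i : ℕ) ≠ m + 1 := by have := i.isLt; omega
        rw [if_neg hne]
        simp only [and_true]
        rcases eq_or_ne i 0 with rfl | hi
        · simp only [Fin.val_zero, pow_zero, one_mul, zero_add, if_true,
            eq_self_iff_true]
          rw [pow_succ]
          field_simp
        · rw [if_neg (fun h => hi (Fin.ext (by rw [h, Fin.val_zero])) : ¬(i : ℕ) = 0), if_neg hi]; ring
    linear_combination hz - hsup - hlow
  have hdet := congrArg Matrix.det key
  rw [Matrix.det_mul, Matrix.det_mul] at hdet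
  exact mul_left_cancel₀ hDdet (by rw [hdet]; ring)

lemma decomp (hm : 0 < m) (a : Fin (m+1) → ℝ) (z u v : ℂ) :
    (Nm a z u v).det
      = (Bm a z).det - u * (updateRow (Bm a z) (Fin.last m) (clv a)).det
          - v * (updateRow (Bm a z) 0 (cuv a)).det
          + u * v * (updateRow (updateRow (Bm a z) (Fin.last m) (clv a)) 0 (cuv a)).det := by
  have h0l : (0 : Fin (m+1)) ≠ Fin.last m := by
    simp only [ne_eq, Fin.ext_iff, Fin.val_zero, Fin.val_last]; omega
  have h1 : Nm a z u v
      = updateRow (Nm a z 0 v) (Fin.last m) (Nm a z 0 v (Fin.last m) + (-u) • clv a) := by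
    ext i j
    rcases eq_or_ne i (Fin.last m) with rfl | hi
    · rw [Matrix.updateRow_self]
      simp only [Nm, clv, Matrix.of_apply, Pi.add_apply, Pi.smul_apply, smul_eq_mul,
        true_and, h0l.symm, false_and, if_false]
      ring
    · rw [Matrix.updateRow_ne hi]
      simp only [Nm, Matrix.of_apply, hi, false_and, if_false]
      ring
  have h2 : Nm a z 0 v = updateRow (Bm a z) 0 (Bm a z 0 + (-v) • cuv a) := by
    ext i j
    rcases eq_or_ne i 0 with rfl | hi
    · rw [Matrix.updateRow_self]
      simp only [Nm, cuv, Matrix.of_apply, Pi.add_apply, Pi.smul_apply, smul_eq_mul,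
        true_and, h0l, false_and, if_false]
      ring
    · rw [Matrix.updateRow_ne hi]
      simp only [Nm, Matrix.of_apply, hi, false_and, if_false]
      ring
  have h3 : updateRow (Nm a z 0 v) (Fin.last m) (clv a)
      = updateRow (updateRow (Bm a z) (Fin.last m) (clv a)) 0
          ((updateRow (Bm a z) (Fin.last m) (clv a)) 0 + (-v) • cuv a) := by
    ext i j
    rcases eq_or_ne i (Fin.last m) with rfl | hi
    · rw [Matrix.updateRow_self, Matrix.updateRow_ne h0l.symm, Matrix.updateRow_self]
    · rw [Matrix.updateRow_ne hi]
      rcases eq_or_ne i 0 with rfl | hi0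
      · rw [Matrix.updateRow_self]
        simp only [Nm, cuv, Matrix.of_apply, Pi.add_apply, Pi.smul_apply, smul_eq_mul,
          true_and, Matrix.updateRow_ne h0l]
        ring
      · rw [Matrix.updateRow_ne hi0, Matrix.updateRow_ne hi]
        simp only [Nm, Matrix.of_apply, hi0, false_and, if_false]
        ring
  rw [h1, Matrix.det_updateRow_add, Matrix.det_updateRow_smul, Matrix.updateRow_eq_self,
    h3, Matrix.det_updateRow_add, Matrix.det_updateRow_smul, Matrix.updateRow_eq_self,
    h2, Matrix.det_updateRow_add, Matrix.det_updateRow_smul, Matrix.updateRow_eq_self]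
  ring

lemma Qval (a : Fin (m+1) → ℝ) (z : ℂ) :
    (updateRow (Bm a z) (Fin.last m) (clv a)).det = ∏ j, (a j : ℂ) := by
  rw [Matrix.det_succ_row _ (Fin.last m)]
  rw [Finset.sum_eq_single 0]
  · have hsub : ((updateRow (Bm a z) (Fin.last m) (clv a)).submatrix
        (Fin.last m).succAbove ((0 : Fin (m+1)).succAbove))
        = Matrix.of (fun r c : Fin m => Bm a z r.castSucc c.succ) := by
      ext r c
      rw [Matrix.submatrix_apply, Fin.succAbove_last, Fin.zero_succAbove,
        Matrix.updateRow_ne (Fin.castSucc_lt_last r).ne, Matrix.of_apply]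
    rw [hsub]
    have hlt : (Matrix.of (fun r c : Fin m => Bm a z r.castSucc c.succ)).BlockTriangular
        OrderDual.toDual := by
      intro r c h
      rw [OrderDual.toDual_lt_toDual, Fin.lt_iff_val_lt_val] at h
      simp only [Matrix.of_apply, Bm]
      rw [if_neg (by rw [Fin.ext_iff]; simp only [Fin.coe_castSucc, Fin.val_succ]; omega),
        if_neg (by simp only [Fin.coe_castSucc, Fin.val_succ]; omega),
        if_neg (by simp only [Fin.coe_castSucc, Fin.val_succ]; omega)]
      ring
    rw [Matrix.det_of_lowerTriangular _ hlt]
    have hdiag : ∀ r : Fin m, Bm a z r.castSucc r.succ = -((a r.castSucc : ℂ)) := by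
      intro r
      simp only [Bm, Matrix.of_apply]
      rw [if_neg (by rw [Fin.ext_iff]; simp only [Fin.coe_castSucc, Fin.val_succ]; omega),
        if_pos (by simp only [Fin.coe_castSucc, Fin.val_succ]),
        if_neg (by simp only [Fin.coe_castSucc, Fin.val_succ]; omega)]
      ring
    have hprod : ∏ r : Fin m, (Matrix.of (fun r c : Fin m => Bm a z r.castSucc c.succ)) r r
        = (-1 : ℂ) ^ m * ∏ r : Fin m, (a r.castSucc : ℂ) := by
      have hneg : ∀ r : Fin m, -((a r.castSucc : ℂ)) = (-1 : ℂ) * (a r.castSucc : ℂ) :=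
        fun r => by ring
      simp only [Matrix.of_apply, hdiag, hneg]
      rw [Finset.prod_mul_distrib, Finset.prod_const, Finset.card_univ, Fintype.card_fin]
    rw [hprod, Matrix.updateRow_self]
    have hsq : (-1 : ℂ) ^ m * (-1 : ℂ) ^ m = 1 := by
      rw [← pow_add]; exact Even.neg_one_pow ⟨m, by ring⟩
    simp only [clv, Fin.val_last, Fin.val_zero, add_zero, if_true, eq_self_iff_true]
    rw [Fin.prod_univ_castSucc]
    linear_combination ((a (Fin.last m) : ℂ) * ∏ r : Fin m, (a r.castSucc : ℂ)) * hsq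
  · intro b _ hb
    rw [Matrix.updateRow_self]
    simp only [clv, hb, if_false, mul_zero, zero_mul]
  · intro h
    exact absurd (Finset.mem_univ _) h

lemma Rval (a : Fin (m+1) → ℝ) (z : ℂ) :
    (updateRow (Bm a z) 0 (cuv a)).det = ∏ j, (a j : ℂ) := by
  rw [Matrix.det_succ_row_zero]
  rw [Finset.sum_eq_single (Fin.last m)]
  · have hsub : ((updateRow (Bm a z) 0 (cuv a)).submatrix
        Fin.succ ((Fin.last m).succAbove))
        = Matrix.of (fun r c : Fin m => Bm a z r.succ c.castSucc) := by
      ext r c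
      rw [Matrix.submatrix_apply, Fin.succAbove_last,
        Matrix.updateRow_ne (Fin.succ_ne_zero r), Matrix.of_apply]
    rw [hsub]
    have hut : (Matrix.of (fun r c : Fin m => Bm a z r.succ c.castSucc)).BlockTriangular id := by
      intro r c h
      rw [id, id, Fin.lt_iff_val_lt_val] at h
      simp only [Matrix.of_apply, Bm]
      rw [if_neg (by rw [Fin.ext_iff]; simp only [Fin.coe_castSucc, Fin.val_succ]; omega),
        if_neg (by simp only [Fin.coe_castSucc, Fin.val_succ]; omega),
        if_neg (by simp only [Fin.coe_castSucc, Fin.val_succ]; omega)]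
      ring
    rw [Matrix.det_of_upperTriangular hut]
    have hdiag : ∀ r : Fin m, Bm a z r.succ r.castSucc = -((a r.castSucc : ℂ)) := by
      intro r
      simp only [Bm, Matrix.of_apply]
      rw [if_neg (by rw [Fin.ext_iff]; simp only [Fin.coe_castSucc, Fin.val_succ]; omega),
        if_neg (by simp only [Fin.coe_castSucc, Fin.val_succ]; omega),
        if_pos (by simp only [Fin.coe_castSucc, Fin.val_succ])]
      ring
    have hprod : ∏ r : Fin m, (Matrix.of (fun r c : Fin m => Bm a z r.succ c.castSucc)) r r
        = (-1 : ℂ) ^ m * ∏ r : Fin m, (a r.castSucc : ℂ) := by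
      have hneg : ∀ r : Fin m, -((a r.castSucc : ℂ)) = (-1 : ℂ) * (a r.castSucc : ℂ) :=
        fun r => by ring
      simp only [Matrix.of_apply, hdiag, hneg]
      rw [Finset.prod_mul_distrib, Finset.prod_const, Finset.card_univ, Fintype.card_fin]
    rw [hprod, Matrix.updateRow_self]
    have hsq : (-1 : ℂ) ^ m * (-1 : ℂ) ^ m = 1 := by
      rw [← pow_add]; exact Even.neg_one_pow ⟨m, by ring⟩
    simp only [cuv, Fin.val_last, if_true, eq_self_iff_true]
    rw [Fin.prod_univ_castSucc]
    linear_combination ((a (Fin.last m) : ℂ) * ∏ r : Fin m, (a r.castSucc : ℂ)) * hsq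
  · intro b _ hb
    rw [Matrix.updateRow_self]
    simp only [cuv, hb, if_false, mul_zero, zero_mul]
  · intro h
    exact absurd (Finset.mem_univ _) h

lemma master {n : ℕ} (hn : 2 ≤ n) (a : Fin n → ℝ) (z w₁ w₂ : ℂ) (h1 : w₁ ≠ 0) (h2 : w₂ ≠ 0) :
    (z • (1 : Matrix (Fin n) (Fin n) ℂ)
        - (w₁ • cyc (fun j => (a j : ℂ)) + w₁⁻¹ • (cyc fun j => (a j : ℂ))ᴴ)).det
      - (z • (1 : Matrix (Fin n) (Fin n) ℂ)
        - (w₂ • cyc (fun j => (a j : ℂ)) + w₂⁻¹ • (cyc fun j => (a j : ℂ))ᴴ)).det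
    = (w₂ ^ n + (w₂ ^ n)⁻¹ - w₁ ^ n - (w₁ ^ n)⁻¹) * ∏ j, (a j : ℂ) := by
  obtain ⟨m, rfl⟩ : ∃ m, n = m + 1 := ⟨n - 1, by omega⟩
  have hm : 0 < m := by omega
  rw [conj_det a z w₁ h1, conj_det a z w₂ h2, decomp hm, decomp hm, Qval, Rval]
  have e1 : w₁ ^ (m+1) * (w₁ ^ (m+1))⁻¹ = 1 := mul_inv_cancel₀ (pow_ne_zero _ h1)
  have e2 : w₂ ^ (m+1) * (w₂ ^ (m+1))⁻¹ = 1 := mul_inv_cancel₀ (pow_ne_zero _ h2)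
  linear_combination
    ((updateRow (updateRow (Bm a z) (Fin.last m) (clv a)) 0 (cuv a)).det) * (e1 - e2)

end StmtAux

theorem stmt2 {k : ℕ} (hk : 1 ≤ k) (a : Fin (2 * k) → ℝ) (ha : ∀ j, 0 < a j)
    (A : Matrix (Fin (2 * k)) (Fin (2 * k)) ℂ) (hA : A = cyc fun j => (a j : ℂ))
    (θ : ℝ) (z : ℂ) :
    (z • (1 : Matrix (Fin (2 * k)) (Fin (2 * k)) ℂ) - (2 : ℂ) • reT θ A).det =
      (z • (1 : Matrix (Fin (2 * k)) (Fin (2 * k)) ℂ)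
          - (Complex.I • A - Complex.I • Aᴴ)).det
        + (-1) ^ k * 2 * (∏ j, (a j : ℂ))
        - 2 * (∏ j, (a j : ℂ)) * Real.cos (2 * k * θ) := by
  subst hA
  have hw1 : Complex.exp (θ * Complex.I) ≠ 0 := Complex.exp_ne_zero _
  have h := StmtAux.master (n := 2*k) (by omega) a z (Complex.exp (θ * Complex.I))
    Complex.I hw1 Complex.I_ne_zero
  have e1 : (2 : ℂ) • reT θ (cyc fun j => ((a j : ℝ) : ℂ))
      = Complex.exp (θ * Complex.I) • cyc (fun j => ((a j : ℝ) : ℂ))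
        + (Complex.exp (θ * Complex.I))⁻¹ • (cyc fun j => ((a j : ℝ) : ℂ))ᴴ := by
    rw [reT, smul_smul, Complex.exp_neg]
    norm_num
  have e2 : Complex.I • cyc (fun j => ((a j : ℝ) : ℂ))
        - Complex.I • (cyc fun j => ((a j : ℝ) : ℂ))ᴴ
      = Complex.I • cyc (fun j => ((a j : ℝ) : ℂ))
        + Complex.I⁻¹ • (cyc fun j => ((a j : ℝ) : ℂ))ᴴ := by
    rw [Complex.inv_I, neg_smul, ← sub_eq_add_neg]
  rw [e1, e2]
  have hI : (Complex.I) ^ (2*k) = (-1 : ℂ) ^ k := by rw [pow_mul, Complex.I_sq]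
  have hIinv : ((-1 : ℂ) ^ k)⁻¹ = (-1 : ℂ) ^ k := by
    rw [← inv_pow, show ((-1 : ℂ))⁻¹ = -1 from by norm_num]
  have hE : Complex.exp (θ * Complex.I) ^ (2*k)
      = Complex.exp (((2*k : ℕ) : ℂ) * (θ * Complex.I)) := (Complex.exp_nat_mul _ _).symm
  have hEinv : (Complex.exp (((2*k : ℕ) : ℂ) * (θ * Complex.I)))⁻¹
      = Complex.exp (-(((2*k : ℕ) : ℂ) * (θ * Complex.I))) := (Complex.exp_neg _).symm
  rw [hI, hIinv, hE, hEinv] at h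
  have hcos : Complex.exp (((2*k : ℕ) : ℂ) * (θ * Complex.I))
        + Complex.exp (-(((2*k : ℕ) : ℂ) * (θ * Complex.I)))
      = 2 * ((Real.cos (2 * (k : ℝ) * θ) : ℝ) : ℂ) := by
    have hx : ((2*k : ℕ) : ℂ) * (θ * Complex.I) = ((2 * (k : ℝ) * θ : ℝ) : ℂ) * Complex.I := by
      push_cast; ring
    rw [hx, show -(((2 * (k : ℝ) * θ : ℝ) : ℂ) * Complex.I)
      = (-((2 * (k : ℝ) * θ : ℝ) : ℂ)) * Complex.I from by ring,
      ← Complex.two_cos, Complex.ofReal_cos]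
  linear_combination h - (∏ j, ((a j : ℝ) : ℂ)) * hcos
end

section
/- Let f(t) and g(t) be monic real polynomials of degree n ≥ 1, each having all n of its roots real, and suppose f(t) = g(t) − h(t) for a real polynomial h(t) of degree smaller than n. If either (a) h(t₁) ≥ 0 where t₁ is the largest real zero of g, or (b) h(t) > 0 for all t ≥ t₂ where t₂ is the largest real zero of f, then the largest real zero of f is greater than or equal to the largest real zero of g. -/
open Polynomial

lemma eval_pos_of_gt_roots (p : Polynomial ℝ) (hp : p.Monic)
    (hc : p.roots.card = p.natDegree) (t s : ℝ)
    (hroots : ∀ r : ℝ, p.IsRoot r → r ≤ s) (hts : s < t) : 0 < p.eval t := by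
  have hne : p ≠ 0 := hp.ne_zero
  conv_rhs => rw [← prod_multiset_X_sub_C_of_monic_of_roots_card_eq hp hc]
  rw [eval_multiset_prod]
  apply Multiset.prod_pos
  intro a ha
  rw [Multiset.map_map] at ha
  simp only [Multiset.mem_map, Function.comp] at ha
  obtain ⟨r, hr, rfl⟩ := ha
  have : r ≤ s := hroots r ((mem_roots hne).mp hr)
  simp only [eval_sub, eval_X, eval_C]
  linarith

theorem stmt5 {n : ℕ} (hn : 1 ≤ n) (f g h : Polynomial ℝ)
    (hfm : f.Monic) (hfd : f.natDegree = n) (hfr : f.roots.card = n)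
    (hgm : g.Monic) (hgd : g.natDegree = n) (hgr : g.roots.card = n)
    (hfgh : f = g - h) (hdeg : h.degree < n)
    (t₁ t₂ : ℝ)
    (ht₁ : g.IsRoot t₁ ∧ ∀ t : ℝ, g.IsRoot t → t ≤ t₁)
    (ht₂ : f.IsRoot t₂ ∧ ∀ t : ℝ, f.IsRoot t → t ≤ t₂)
    (hcase : 0 ≤ h.eval t₁ ∨ ∀ t : ℝ, t₂ ≤ t → 0 < h.eval t) :
    t₁ ≤ t₂ := by
  by_contra hlt
  push_neg at hlt
  have hfpos : 0 < f.eval t₁ :=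
    eval_pos_of_gt_roots f hfm (hfr.trans hfd.symm) t₁ t₂ ht₂.2 hlt
  have hfeval : f.eval t₁ = -h.eval t₁ := by
    rw [hfgh]; simp [ht₁.1.eq_zero]
  rcases hcase with hc | hc
  · linarith [hfeval ▸ hfpos]
  · have := hc t₁ hlt.le
    linarith [hfeval ▸ hfpos]
end

section
/- Let n ≥ 2, let A = S(a₁, …, aₙ) with a₁, …, aₙ > 0, and set α = ∏_{j=1}^n aⱼ. Define the monic degree-n polynomial f(z) = det(zI − 2·Re(e^{iπ/(2n)}A)). Then for every θ ∈ ℝ and every z ∈ ℂ, det(zI − 2·Re(e^{iθ}A)) = f(z) − 2α·cos(nθ); in particular the polynomial det(zI − 2·Re(e^{iθ}A)) + 2α·cos(nθ) is independent of θ. -/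
open Matrix BigOperators

namespace Stmt6
variable {n : ℕ}
noncomputable def B (z : ℂ) (a : Fin n → ℝ) (u v : ℂ) : Matrix (Fin n) (Fin n) ℂ :=
  Matrix.of fun j k =>
    (if j = k then z else 0)
    + (if (j : ℕ) + 1 = n ∧ (k : ℕ) = 0 then -(u * a j)
       else if (k : ℕ) = (j : ℕ) + 1 then -(a j : ℂ) else 0)
    + (if (k : ℕ) + 1 = n ∧ (j : ℕ) = 0 then -(v * a k)
       else if (j : ℕ) = (k : ℕ) + 1 then -(a k : ℂ) else 0)

lemma M_apply (θ : ℝ) (z : ℂ) (a : Fin n → ℝ) (j k : Fin n) :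
    (z • (1 : Matrix (Fin n) (Fin n) ℂ) - (2 : ℂ) • reT θ (cyc fun i => (a i : ℂ))) j k =
      (if j = k then z else 0)
      - Complex.exp (θ * Complex.I) * (if (k : ℕ) = ((j : ℕ) + 1) % n then (a j : ℂ) else 0)
      - Complex.exp (-(θ * Complex.I)) * (if (j : ℕ) = ((k : ℕ) + 1) % n then (a k : ℂ) else 0) := by
  simp only [reT, cyc, Matrix.sub_apply, Matrix.smul_apply, Matrix.add_apply, Matrix.one_apply,
    Matrix.conjTranspose_apply, Matrix.of_apply, smul_eq_mul, Complex.star_def,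
    apply_ite (starRingEnd ℂ), map_zero, Complex.conj_ofReal]
  split_ifs <;> ring

lemma conj_det (hn : 2 ≤ n) (θ : ℝ) (z : ℂ) (a : Fin n → ℝ) :
    (z • (1 : Matrix (Fin n) (Fin n) ℂ) - (2 : ℂ) • reT θ (cyc fun i => (a i : ℂ))).det =
      (B z a (Complex.exp (n * θ * Complex.I)) (Complex.exp (-(n * θ * Complex.I)))).det := by
  classical
  set M := z • (1 : Matrix (Fin n) (Fin n) ℂ) - (2 : ℂ) • reT θ (cyc fun i => (a i : ℂ)) with hM
  set d : Fin n → ℂ := fun i => Complex.exp ((((i : ℕ) : ℂ) + 1) * θ * Complex.I) with hd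
  set e : Fin n → ℂ := fun i => Complex.exp (-((((i : ℕ) : ℂ) + 1) * θ * Complex.I)) with he
  have comb : ∀ (p q r c : ℂ),
      Complex.exp p * (Complex.exp q * c) * Complex.exp r = Complex.exp (p + q + r) * c := by
    intro p q r c; rw [Complex.exp_add, Complex.exp_add]; ring
  have key : Matrix.diagonal d * M * Matrix.diagonal e =
      B z a (Complex.exp (n * θ * Complex.I)) (Complex.exp (-(n * θ * Complex.I))) := by
    ext j k
    rw [Matrix.mul_diagonal, Matrix.diagonal_mul, hM, M_apply]
    have h1 : d j * (if j = k then z else 0) * e k = (if j = k then z else 0) := by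
      split_ifs with h
      · subst h
        have : d j * e j = 1 := by
          rw [hd, he]
          dsimp only
          rw [← Complex.exp_add, add_neg_cancel, Complex.exp_zero]
        calc d j * z * e j = (d j * e j) * z := by ring
          _ = z := by rw [this]; ring
      · ring
    have h2 : d j * (Complex.exp (θ * Complex.I) *
          (if (k : ℕ) = ((j : ℕ) + 1) % n then (a j : ℂ) else 0)) * e k =
        (if (j : ℕ) + 1 = n ∧ (k : ℕ) = 0 then Complex.exp (n * θ * Complex.I) * (a j : ℂ)
         else if (k : ℕ) = (j : ℕ) + 1 then (a j : ℂ) else 0) := by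
      by_cases hb1 : (j : ℕ) + 1 = n ∧ (k : ℕ) = 0
      · have hc : (k : ℕ) = ((j : ℕ) + 1) % n := by rw [hb1.1, Nat.mod_self]; exact hb1.2
        rw [if_pos hc, if_pos hb1, hd, he]
        dsimp only
        rw [comb]
        congr 1
        have e1 : ((j : ℕ) : ℂ) + 1 = (n : ℂ) := by exact_mod_cast hb1.1
        have e2 : ((k : ℕ) : ℂ) = 0 := by exact_mod_cast hb1.2
        rw [e1, e2]; ring
      · rw [if_neg hb1]
        by_cases hb2 : (k : ℕ) = (j : ℕ) + 1
        · have hlt : (j : ℕ) + 1 < n := by have := k.isLt; omega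
          have hc : (k : ℕ) = ((j : ℕ) + 1) % n := by rw [Nat.mod_eq_of_lt hlt]; exact hb2
          rw [if_pos hc, if_pos hb2, hd, he]
          dsimp only
          rw [comb]
          have e2 : ((k : ℕ) : ℂ) = ((j : ℕ) : ℂ) + 1 := by exact_mod_cast hb2
          rw [show (((j:ℕ):ℂ) + 1) * θ * Complex.I + θ * Complex.I +
              -((((k:ℕ):ℂ) + 1) * θ * Complex.I) = (((j:ℕ):ℂ) + 1 - ((k:ℕ):ℂ)) * θ * Complex.I
            by ring, e2]
          norm_num
        · have hc : ¬((k : ℕ) = ((j : ℕ) + 1) % n) := by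
            intro h
            by_cases hj : (j : ℕ) + 1 = n
            · rw [hj, Nat.mod_self] at h; exact hb1 ⟨hj, h⟩
            · rw [Nat.mod_eq_of_lt (lt_of_le_of_ne j.isLt hj)] at h; exact hb2 h
          rw [if_neg hc, if_neg hb2]; ring
    have h3 : d j * (Complex.exp (-(θ * Complex.I)) *
          (if (j : ℕ) = ((k : ℕ) + 1) % n then (a k : ℂ) else 0)) * e k =
        (if (k : ℕ) + 1 = n ∧ (j : ℕ) = 0 then Complex.exp (-(n * θ * Complex.I)) * (a k : ℂ)
         else if (j : ℕ) = (k : ℕ) + 1 then (a k : ℂ) else 0) := by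
      by_cases hb1 : (k : ℕ) + 1 = n ∧ (j : ℕ) = 0
      · have hc : (j : ℕ) = ((k : ℕ) + 1) % n := by rw [hb1.1, Nat.mod_self]; exact hb1.2
        rw [if_pos hc, if_pos hb1, hd, he]
        dsimp only
        rw [comb]
        congr 1
        have e1 : ((k : ℕ) : ℂ) + 1 = (n : ℂ) := by exact_mod_cast hb1.1
        have e2 : ((j : ℕ) : ℂ) = 0 := by exact_mod_cast hb1.2
        rw [e1, e2]; ring
      · rw [if_neg hb1]
        by_cases hb2 : (j : ℕ) = (k : ℕ) + 1
        · have hlt : (k : ℕ) + 1 < n := by have := j.isLt; omega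
          have hc : (j : ℕ) = ((k : ℕ) + 1) % n := by rw [Nat.mod_eq_of_lt hlt]; exact hb2
          rw [if_pos hc, if_pos hb2, hd, he]
          dsimp only
          rw [comb]
          have e2 : ((j : ℕ) : ℂ) = ((k : ℕ) : ℂ) + 1 := by exact_mod_cast hb2
          rw [show (((j:ℕ):ℂ) + 1) * θ * Complex.I + -(θ * Complex.I) +
              -((((k:ℕ):ℂ) + 1) * θ * Complex.I) = (((j:ℕ):ℂ) - ((k:ℕ):ℂ) - 1) * θ * Complex.I
            by ring, e2]
          norm_num
        · have hc : ¬((j : ℕ) = ((k : ℕ) + 1) % n) := by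
            intro h
            by_cases hk : (k : ℕ) + 1 = n
            · rw [hk, Nat.mod_self] at h; exact hb1 ⟨hk, h⟩
            · rw [Nat.mod_eq_of_lt (lt_of_le_of_ne k.isLt hk)] at h; exact hb2 h
          rw [if_neg hc, if_neg hb2]; ring
    calc d j * ((if j = k then z else 0)
          - Complex.exp (θ * Complex.I) * (if (k : ℕ) = ((j : ℕ) + 1) % n then (a j : ℂ) else 0)
          - Complex.exp (-(θ * Complex.I)) * (if (j : ℕ) = ((k : ℕ) + 1) % n then (a k : ℂ) else 0)) * e k
        = d j * (if j = k then z else 0) * e k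
          - d j * (Complex.exp (θ * Complex.I) * (if (k : ℕ) = ((j : ℕ) + 1) % n then (a j : ℂ) else 0)) * e k
          - d j * (Complex.exp (-(θ * Complex.I)) * (if (j : ℕ) = ((k : ℕ) + 1) % n then (a k : ℂ) else 0)) * e k := by
          ring
      _ = _ := by
          rw [h1, h2, h3]
          simp only [B, Matrix.of_apply]
          split_ifs <;> ring
  have hde : (∏ i, d i) * (∏ i, e i) = 1 := by
    rw [← Finset.prod_mul_distrib]
    apply Finset.prod_eq_one
    intro i _
    rw [hd, he]
    dsimp only
    rw [← Complex.exp_add, add_neg_cancel, Complex.exp_zero]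
  have := congrArg Matrix.det key
  rw [Matrix.det_mul, Matrix.det_mul, Matrix.det_diagonal, Matrix.det_diagonal] at this
  rw [← this]
  calc M.det = ((∏ i, d i) * (∏ i, e i)) * M.det := by rw [hde]; ring
    _ = (∏ i, d i) * M.det * (∏ i, e i) := by ring


def L (hn : 2 ≤ n) : Fin n := ⟨n - 1, by omega⟩
def Z (hn : 2 ≤ n) : Fin n := ⟨0, by omega⟩

noncomputable def s1 (hn : 2 ≤ n) (a : Fin n → ℝ) : Fin n → ℂ :=
  fun k => if (k : ℕ) = 0 then -(a (L hn) : ℂ) else 0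
noncomputable def s0 (hn : 2 ≤ n) (a : Fin n → ℝ) : Fin n → ℂ :=
  fun k => if (k : ℕ) + 1 = n then -(a (L hn) : ℂ) else 0

lemma updateRow_comm {M : Matrix (Fin n) (Fin n) ℂ} {i j : Fin n} (h : i ≠ j)
    (r s : Fin n → ℂ) :
    updateRow (updateRow M i r) j s = updateRow (updateRow M j s) i r := by
  ext x k
  rcases eq_or_ne x i with rfl | h1
  · rw [Matrix.updateRow_ne h, Matrix.updateRow_self, Matrix.updateRow_self]
  · rcases eq_or_ne x j with rfl | h2
    · rw [Matrix.updateRow_self, Matrix.updateRow_ne (Ne.symm h), Matrix.updateRow_self]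
    · rw [Matrix.updateRow_ne h2, Matrix.updateRow_ne h1, Matrix.updateRow_ne h1,
        Matrix.updateRow_ne h2]

lemma hU (hn : 2 ≤ n) (z : ℂ) (a : Fin n → ℝ) (u v : ℂ) :
    B z a u v = updateRow (B z a 0 v) (L hn) (B z a 0 v (L hn) + u • s1 hn a) := by
  have hL : ((L hn : Fin n) : ℕ) = n - 1 := rfl
  ext j k
  by_cases hj : j = L hn
  · subst hj
    rw [Matrix.updateRow_self]
    simp only [B, Matrix.of_apply, Pi.add_apply, Pi.smul_apply, s1, smul_eq_mul]
    by_cases hk : (k : ℕ) = 0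
    · have hc : ((L hn : Fin n) : ℕ) + 1 = n ∧ (k : ℕ) = 0 := ⟨by omega, hk⟩
      rw [if_pos hc, if_pos hc, if_pos hk]
      ring
    · have hc : ¬(((L hn : Fin n) : ℕ) + 1 = n ∧ (k : ℕ) = 0) := fun h => hk h.2
      rw [if_neg hc, if_neg hc, if_neg hk]
      ring
  · rw [Matrix.updateRow_ne hj]
    have hc : ¬((j : ℕ) + 1 = n ∧ (k : ℕ) = 0) := by
      rintro ⟨h1, -⟩
      exact hj (Fin.ext (by omega))
    simp only [B, Matrix.of_apply, if_neg hc]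

lemma hV (hn : 2 ≤ n) (z : ℂ) (a : Fin n → ℝ) (v : ℂ) :
    B z a 0 v = updateRow (B z a 0 0) (Z hn) (B z a 0 0 (Z hn) + v • s0 hn a) := by
  have hL : ((L hn : Fin n) : ℕ) = n - 1 := rfl
  ext j k
  by_cases hj : j = Z hn
  · subst hj
    rw [Matrix.updateRow_self]
    simp only [B, Matrix.of_apply, Pi.add_apply, Pi.smul_apply, s0, smul_eq_mul]
    by_cases hk : (k : ℕ) + 1 = n
    · have hc : (k : ℕ) + 1 = n ∧ ((Z hn : Fin n) : ℕ) = 0 := ⟨hk, rfl⟩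
      have hkL : k = L hn := Fin.ext (by simp [hL]; omega)
      rw [if_pos hc, if_pos hc, if_pos hk, hkL]
      ring
    · have hc : ¬((k : ℕ) + 1 = n ∧ ((Z hn : Fin n) : ℕ) = 0) := fun h => hk h.1
      rw [if_neg hc, if_neg hc, if_neg hk]
      ring
  · rw [Matrix.updateRow_ne hj]
    have hc : ¬((k : ℕ) + 1 = n ∧ (j : ℕ) = 0) := by
      rintro ⟨-, h1⟩
      exact hj (Fin.ext h1)
    simp only [B, Matrix.of_apply, if_neg hc]

lemma det_B (hn : 2 ≤ n) (z : ℂ) (a : Fin n → ℝ) (u v : ℂ) :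
    (B z a u v).det = (B z a 0 0).det
      + u * (updateRow (B z a 0 0) (L hn) (s1 hn a)).det
      + v * (updateRow (B z a 0 0) (Z hn) (s0 hn a)).det
      + u * v * (updateRow (updateRow (B z a 0 0) (L hn) (s1 hn a)) (Z hn) (s0 hn a)).det := by
  have hZL : (Z hn : Fin n) ≠ L hn := by
    intro h
    have := congrArg Fin.val h
    simp [Z, L] at this
    omega
  have step1 : (B z a u v).det = (B z a 0 v).det
      + u * (updateRow (B z a 0 v) (L hn) (s1 hn a)).det := by
    rw [hU hn z a u v, Matrix.det_updateRow_add, Matrix.det_updateRow_smul,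
      Matrix.updateRow_eq_self]
  have step2 : (B z a 0 v).det = (B z a 0 0).det
      + v * (updateRow (B z a 0 0) (Z hn) (s0 hn a)).det := by
    rw [hV hn z a v, Matrix.det_updateRow_add, Matrix.det_updateRow_smul,
      Matrix.updateRow_eq_self]
  have step3 : (updateRow (B z a 0 v) (L hn) (s1 hn a)).det
      = (updateRow (B z a 0 0) (L hn) (s1 hn a)).det
        + v * (updateRow (updateRow (B z a 0 0) (L hn) (s1 hn a)) (Z hn) (s0 hn a)).det := by
    rw [hV hn z a v]
    rw [updateRow_comm hZL]
    rw [show (B z a 0 0) (Z hn) = (updateRow (B z a 0 0) (L hn) (s1 hn a)) (Z hn) from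
      (Matrix.updateRow_ne hZL).symm]
    rw [Matrix.det_updateRow_add, Matrix.det_updateRow_smul, Matrix.updateRow_eq_self]
  rw [step1, step3, step2]
  ring


lemma B00_eq_zero (z : ℂ) (a : Fin n → ℝ) (j k : Fin n) (h1 : (j : ℕ) ≠ (k : ℕ))
    (h2 : (k : ℕ) ≠ (j : ℕ) + 1) (h3 : (j : ℕ) ≠ (k : ℕ) + 1) : B z a 0 0 j k = 0 := by
  have hjk : j ≠ k := fun h => h1 (congrArg Fin.val h)
  simp only [B, Matrix.of_apply, if_neg hjk, zero_mul, neg_zero]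
  rw [if_neg (fun h => h2 h), if_neg (fun h => h3 h), ite_self, ite_self]
  ring

lemma B00_super (z : ℂ) (a : Fin n → ℝ) (j k : Fin n) (h : (k : ℕ) = (j : ℕ) + 1) :
    B z a 0 0 j k = -(a j : ℂ) := by
  have hjk : j ≠ k := by intro e; exact absurd (congrArg Fin.val e) (by omega)
  simp only [B, Matrix.of_apply, if_neg hjk, zero_mul, neg_zero]
  rw [if_neg (show ¬((j:ℕ) + 1 = n ∧ (k:ℕ) = 0) by rintro ⟨h1, h2⟩; omega), if_pos h,
    if_neg (show ¬((j:ℕ) = (k:ℕ) + 1) by omega), ite_self]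
  ring

lemma B00_sub (z : ℂ) (a : Fin n → ℝ) (j k : Fin n) (h : (j : ℕ) = (k : ℕ) + 1) :
    B z a 0 0 j k = -(a k : ℂ) := by
  have hjk : j ≠ k := by intro e; exact absurd (congrArg Fin.val e) (by omega)
  simp only [B, Matrix.of_apply, if_neg hjk, zero_mul, neg_zero]
  rw [if_neg (show ¬((k:ℕ) = (j:ℕ) + 1) by omega), ite_self,
    if_neg (show ¬((k:ℕ) + 1 = n ∧ (j:ℕ) = 0) by rintro ⟨h1, h2⟩; omega), if_pos h]
  ring

lemma prod_neg_a (m : ℕ) (a : Fin (m + 1) → ℝ) :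
    ∏ j : Fin (m + 1), -(a j : ℂ) = (-1 : ℂ) ^ (m + 1) * ∏ j, (a j : ℂ) := by
  calc ∏ j : Fin (m + 1), -(a j : ℂ) = ∏ j : Fin (m + 1), (-1 : ℂ) * (a j : ℂ) := by
        apply Finset.prod_congr rfl; intro j _; ring
    _ = (∏ _j : Fin (m + 1), (-1 : ℂ)) * ∏ j, (a j : ℂ) := Finset.prod_mul_distrib
    _ = (-1 : ℂ) ^ (m + 1) * ∏ j, (a j : ℂ) := by
        rw [Finset.prod_const, Finset.card_univ, Fintype.card_fin]

lemma detW (hn : 2 ≤ n) (z : ℂ) (a : Fin n → ℝ) :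
    (updateRow (B z a 0 0) (L hn) (s1 hn a)).det = -∏ j, (a j : ℂ) := by
  obtain ⟨m, rfl⟩ : ∃ m, n = m + 1 := ⟨n - 1, by omega⟩
  set σ : Equiv.Perm (Fin (m + 1)) := finRotate (m + 1) with hσ
  have hL : L hn = Fin.last m := Fin.ext rfl
  set P : Matrix (Fin (m + 1)) (Fin (m + 1)) ℂ := Matrix.of fun i k =>
    if (i : ℕ) = 0 then (if (k : ℕ) = 0 then -(a (L hn) : ℂ) else 0)
    else B z a 0 0 ⟨(i : ℕ) - 1, by omega⟩ k with hP
  have hP0 : ∀ (j k : Fin (m + 1)), (j : ℕ) = 0 →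
      P j k = (if (k : ℕ) = 0 then -(a (L hn) : ℂ) else 0) := by
    intro j k h; simp only [hP, Matrix.of_apply, if_pos h]
  have hPs : ∀ (j k r : Fin (m + 1)), (j : ℕ) ≠ 0 → (r : ℕ) = (j : ℕ) - 1 →
      P j k = B z a 0 0 r k := by
    intro j k r h hr
    simp only [hP, Matrix.of_apply, if_neg h]
    congr 1
    exact Fin.ext hr.symm
  have hPW : P.submatrix σ id = updateRow (B z a 0 0) (L hn) (s1 hn a) := by
    ext i k
    rw [Matrix.submatrix_apply, id]
    rcases eq_or_ne i (L hn) with rfl | hi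
    · have hv : ((σ (L hn)) : ℕ) = 0 := by rw [hL]; simp [hσ, coe_finRotate]
      rw [Matrix.updateRow_self, hP0 _ _ hv]
      rfl
    · have hv : ((σ i) : ℕ) = (i : ℕ) + 1 := by
        apply coe_finRotate_of_ne_last
        rwa [← hL]
      rw [Matrix.updateRow_ne hi, hPs (σ i) k i (by omega) (by omega)]
  have htri : P.BlockTriangular OrderDual.toDual := by
    intro i k h
    have hik : (i : ℕ) < (k : ℕ) := h
    by_cases h0 : (i : ℕ) = 0
    · rw [hP0 i k h0, if_neg (by omega)]
    · rw [hPs i k ⟨(i : ℕ) - 1, by omega⟩ h0 rfl]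
      exact B00_eq_zero z a _ k (by simp; omega) (by simp; omega) (by simp; omega)
  have hdiag : ∏ i, P i i = ∏ j : Fin (m + 1), -(a j : ℂ) := by
    conv_lhs => rw [← Equiv.prod_comp σ (fun i => P i i)]
    apply Finset.prod_congr rfl
    intro j _
    rcases eq_or_ne j (Fin.last m) with rfl | hj
    · have hv : ((σ (Fin.last m)) : ℕ) = 0 := by simp [hσ, coe_finRotate]
      rw [hP0 _ _ hv, if_pos hv, hL]
    · have hv : ((σ j) : ℕ) = (j : ℕ) + 1 := coe_finRotate_of_ne_last hj
      rw [hPs (σ j) (σ j) j (by omega) (by omega)]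
      exact B00_super z a j (σ j) hv
  have hdet : (updateRow (B z a 0 0) (L hn) (s1 hn a)).det = Equiv.Perm.sign σ * P.det := by
    rw [← hPW]; exact Matrix.det_permute σ P
  rw [hdet, Matrix.det_of_lowerTriangular P htri, hdiag, prod_neg_a, hσ, sign_finRotate]
  push_cast
  have hpow : ((-1 : ℂ)) ^ m * (-1 : ℂ) ^ (m + 1) = -1 := by
    rw [← pow_add, show m + (m + 1) = 2 * m + 1 by omega, pow_succ, pow_mul]
    norm_num
  calc ((-1 : ℂ)) ^ m * ((-1 : ℂ) ^ (m + 1) * ∏ j, (a j : ℂ))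
      = ((-1 : ℂ) ^ m * (-1 : ℂ) ^ (m + 1)) * ∏ j, (a j : ℂ) := by ring
    _ = -∏ j, (a j : ℂ) := by rw [hpow]; ring

lemma detV (hn : 2 ≤ n) (z : ℂ) (a : Fin n → ℝ) :
    (updateRow (B z a 0 0) (Z hn) (s0 hn a)).det = -∏ j, (a j : ℂ) := by
  obtain ⟨m, rfl⟩ : ∃ m, n = m + 1 := ⟨n - 1, by omega⟩
  set σ : Equiv.Perm (Fin (m + 1)) := finRotate (m + 1) with hσ
  have hL : L hn = Fin.last m := Fin.ext rfl
  set Q : Matrix (Fin (m + 1)) (Fin (m + 1)) ℂ := Matrix.of fun i k =>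
    if (i : ℕ) = m then (if (k : ℕ) = m then -(a (L hn) : ℂ) else 0)
    else B z a 0 0 ⟨min ((i : ℕ) + 1) m, by omega⟩ k with hQ
  have hQ0 : ∀ (j k : Fin (m + 1)), (j : ℕ) = m →
      Q j k = (if (k : ℕ) = m then -(a (L hn) : ℂ) else 0) := by
    intro j k h; simp only [hQ, Matrix.of_apply, if_pos h]
  have hQs : ∀ (j k r : Fin (m + 1)), (j : ℕ) ≠ m → (r : ℕ) = (j : ℕ) + 1 →
      Q j k = B z a 0 0 r k := by
    intro j k r h hr
    simp only [hQ, Matrix.of_apply, if_neg h]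
    congr 1
    refine Fin.ext ?_
    have hj : (j : ℕ) < m := by have := j.isLt; omega
    simp only []
    rw [min_eq_left (by omega)]
    omega
  have hQV : Q.submatrix (σ⁻¹ : Equiv.Perm (Fin (m + 1))) id
      = updateRow (B z a 0 0) (Z hn) (s0 hn a) := by
    ext i k
    rw [Matrix.submatrix_apply, id]
    have hij : σ (σ⁻¹ i) = i := Equiv.apply_symm_apply σ i
    rcases eq_or_ne (σ⁻¹ i) (Fin.last m) with hj | hj
    · have hi0 : (i : ℕ) = 0 := by
        rw [← hij, hj]; simp [hσ, coe_finRotate]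
      have hiZ : i = Z hn := Fin.ext hi0
      rw [hiZ, Matrix.updateRow_self, hQ0 _ _ (by rw [← hiZ, hj]; simp)]
      simp only [s0]
      by_cases hk : (k : ℕ) = m
      · rw [if_pos hk, if_pos (by omega)]
      · rw [if_neg hk, if_neg (by omega)]
    · have hv : ((σ (σ⁻¹ i)) : ℕ) = ((σ⁻¹ i : Fin (m+1)) : ℕ) + 1 :=
        coe_finRotate_of_ne_last hj
      rw [hij] at hv
      have hiZ : i ≠ Z hn := by
        intro h
        have : (i : ℕ) = 0 := congrArg Fin.val h
        omega
      have hjm : ((σ⁻¹ i : Fin (m+1)) : ℕ) ≠ m := by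
        intro h
        exact hj (Fin.ext h)
      rw [Matrix.updateRow_ne hiZ, hQs _ k i hjm (by omega)]
  have htri : Q.BlockTriangular id := by
    intro i k h
    have hik : (k : ℕ) < (i : ℕ) := h
    by_cases h0 : (i : ℕ) = m
    · rw [hQ0 i k h0, if_neg (by omega)]
    · rw [hQs i k ⟨(i : ℕ) + 1, by have := i.isLt; omega⟩ h0 rfl]
      exact B00_eq_zero z a _ k (by simp; omega) (by simp; omega) (by simp; omega)
  have hdiag : ∏ i, Q i i = ∏ j : Fin (m + 1), -(a j : ℂ) := by
    apply Finset.prod_congr rfl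
    intro j _
    by_cases h0 : (j : ℕ) = m
    · rw [hQ0 j j h0, if_pos h0]
      have : j = L hn := Fin.ext (by simp [hL]; omega)
      rw [this]
    · rw [hQs j j ⟨(j : ℕ) + 1, by have := j.isLt; omega⟩ h0 rfl]
      exact B00_sub z a _ j (by simp)
  have hdet : (updateRow (B z a 0 0) (Z hn) (s0 hn a)).det
      = Equiv.Perm.sign σ⁻¹ * Q.det := by
    rw [← hQV]; exact Matrix.det_permute σ⁻¹ Q
  rw [hdet, Matrix.det_of_upperTriangular htri, hdiag, prod_neg_a, Equiv.Perm.sign_inv, hσ,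
    sign_finRotate]
  push_cast
  have hpow : ((-1 : ℂ)) ^ m * (-1 : ℂ) ^ (m + 1) = -1 := by
    rw [← pow_add, show m + (m + 1) = 2 * m + 1 by omega, pow_succ, pow_mul]
    norm_num
  calc ((-1 : ℂ)) ^ m * ((-1 : ℂ) ^ (m + 1) * ∏ j, (a j : ℂ))
      = ((-1 : ℂ) ^ m * (-1 : ℂ) ^ (m + 1)) * ∏ j, (a j : ℂ) := by ring
    _ = -∏ j, (a j : ℂ) := by rw [hpow]; ring

end Stmt6

theorem stmt6 {n : ℕ} (hn : 2 ≤ n) (a : Fin n → ℝ) (ha : ∀ j, 0 < a j)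
    (A : Matrix (Fin n) (Fin n) ℂ) (hA : A = cyc fun j => (a j : ℂ))
    (θ : ℝ) (z : ℂ) :
    (z • (1 : Matrix (Fin n) (Fin n) ℂ) - (2 : ℂ) • reT θ A).det =
      (z • (1 : Matrix (Fin n) (Fin n) ℂ) - (2 : ℂ) • reT (Real.pi / (2 * n)) A).det
        - 2 * (∏ j, (a j : ℂ)) * Real.cos (n * θ) := by
  subst hA
  rw [Stmt6.conj_det hn θ z a, Stmt6.conj_det hn (Real.pi / (2 * (n : ℝ))) z a,
    Stmt6.det_B hn z a (Complex.exp ((n : ℂ) * (θ : ℂ) * Complex.I))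
      (Complex.exp (-((n : ℂ) * (θ : ℂ) * Complex.I))),
    Stmt6.det_B hn z a (Complex.exp ((n : ℂ) * ((Real.pi / (2 * (n : ℝ)) : ℝ) : ℂ) * Complex.I))
      (Complex.exp (-((n : ℂ) * ((Real.pi / (2 * (n : ℝ)) : ℝ) : ℂ) * Complex.I))),
    Stmt6.detW hn z a, Stmt6.detV hn z a]
  set α := ∏ j, (a j : ℂ) with hα
  set X := (updateRow (updateRow (Stmt6.B z a 0 0) (Stmt6.L hn) (Stmt6.s1 hn a)) (Stmt6.Z hn)
    (Stmt6.s0 hn a)).det with hX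
  have hc : ∀ x : ℂ, Complex.exp (x * Complex.I) + Complex.exp (-(x * Complex.I))
      = 2 * Complex.cos x := by
    intro x
    simp only [Complex.cos]
    ring_nf
  have hn0 : ((n : ℝ)) ≠ 0 := by
    have : (0:ℝ) < (n:ℝ) := by exact_mod_cast (by omega : 0 < n)
    linarith
  have huv : Complex.exp ((n : ℂ) * (θ : ℂ) * Complex.I)
      * Complex.exp (-((n : ℂ) * (θ : ℂ) * Complex.I)) = 1 := by
    rw [← Complex.exp_add, add_neg_cancel, Complex.exp_zero]
  have huv' : Complex.exp ((n : ℂ) * ((Real.pi / (2 * (n : ℝ)) : ℝ) : ℂ) * Complex.I)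
      * Complex.exp (-((n : ℂ) * ((Real.pi / (2 * (n : ℝ)) : ℝ) : ℂ) * Complex.I)) = 1 := by
    rw [← Complex.exp_add, add_neg_cancel, Complex.exp_zero]
  have hsum : Complex.exp ((n : ℂ) * (θ : ℂ) * Complex.I)
      + Complex.exp (-((n : ℂ) * (θ : ℂ) * Complex.I))
      = 2 * ((Real.cos ((n : ℝ) * θ) : ℝ) : ℂ) := by
    rw [hc ((n : ℂ) * (θ : ℂ)), Complex.ofReal_cos]
    congr 1
    push_cast
    ring
  have hn0c : ((n : ℂ)) ≠ 0 := by exact_mod_cast (by omega : n ≠ 0)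
  have harg : (n : ℂ) * ((Real.pi / (2 * (n : ℝ)) : ℝ) : ℂ) = (Real.pi : ℂ) / 2 := by
    push_cast
    field_simp
  have hsum' : Complex.exp ((n : ℂ) * ((Real.pi / (2 * (n : ℝ)) : ℝ) : ℂ) * Complex.I)
      + Complex.exp (-((n : ℂ) * ((Real.pi / (2 * (n : ℝ)) : ℝ) : ℂ) * Complex.I)) = 0 := by
    rw [hc, harg, Complex.cos_pi_div_two, mul_zero]
  linear_combination (-(α)) * hsum + α * hsum' + X * huv - X * huv'
end

section
/- Let A = S(a₁, a₂) and B = S(b₁, b₂) be 2×2 cyclic shift matrices with a₁, a₂, b₁, b₂ ≥ 0. Then W(B) ⊆ W(A) if and only if |b₁ − b₂| ≤ |a₁ − a₂| and b₁ + b₂ ≤ a₁ + a₂. -/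
open Matrix BigOperators

set_option maxHeartbeats 1000000

lemma cyc2_dot (a b : ℝ) (x : Fin 2 → ℂ) :
    star x ⬝ᵥ (cyc ![(a:ℂ), b]).mulVec x
      = (a:ℂ) * ((starRingEnd ℂ) (x 0) * x 1)
        + b * (starRingEnd ℂ) ((starRingEnd ℂ) (x 0) * x 1) := by
  simp [cyc, Matrix.mulVec, dotProduct, Fin.sum_univ_two, Matrix.of_apply, _root_.map_mul]
  ring

lemma mem_numRange_cyc2 (a b : ℝ) (z : ℂ) :
    z ∈ numRange (cyc ![(a:ℂ), b]) ↔
      ∃ u v : ℝ, u^2 + v^2 ≤ 1/4 ∧ z.re = (a+b)*u ∧ z.im = (a-b)*v := by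
  constructor
  · rintro ⟨x, hx, rfl⟩
    set t : ℂ := (starRingEnd ℂ) (x 0) * x 1 with ht
    have hdot : star x ⬝ᵥ (cyc ![(a:ℂ), b]).mulVec x
        = (a:ℂ) * t + b * (starRingEnd ℂ) t := cyc2_dot a b x
    have hnorm : Complex.normSq (x 0) + Complex.normSq (x 1) = 1 := by
      have := congrArg Complex.re hx
      simpa [dotProduct, Fin.sum_univ_two, mul_comm, Complex.mul_conj, Complex.add_re,
        Complex.ofReal_re] using this
    have h0 : 0 ≤ Complex.normSq (x 0) := Complex.normSq_nonneg _
    have h1 : 0 ≤ Complex.normSq (x 1) := Complex.normSq_nonneg _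
    have hts : Complex.normSq t = Complex.normSq (x 0) * Complex.normSq (x 1) := by
      simp [ht, Complex.normSq_mul]
    refine ⟨t.re, t.im, ?_, ?_, ?_⟩
    · have hle : Complex.normSq t ≤ 1/4 := by
        rw [hts]
        nlinarith [sq_nonneg (Complex.normSq (x 0) - Complex.normSq (x 1))]
      have : t.re ^ 2 + t.im ^ 2 = Complex.normSq t := by
        simp [Complex.normSq_apply]; ring
      linarith
    · rw [hdot]; simp [Complex.add_re, Complex.mul_re]; ring
    · rw [hdot]; simp [Complex.add_im, Complex.mul_im]; ring
  · rintro ⟨u, v, huv, hre, him⟩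
    by_cases hz0 : u^2 + v^2 = 0
    · have hu : u = 0 := by nlinarith [sq_nonneg u, sq_nonneg v]
      have hv : v = 0 := by nlinarith [sq_nonneg u, sq_nonneg v]
      refine ⟨![1, 0], by simp [dotProduct, Fin.sum_univ_two], ?_⟩
      rw [cyc2_dot]
      apply Complex.ext <;> simp [hre, him, hu, hv]
    · set ρ : ℝ := Real.sqrt (u^2+v^2) with hρ
      set q : ℝ := Real.sqrt (1/4 - (u^2+v^2)) with hq
      set c : ℝ := Real.sqrt (1/2 + q) with hc
      set s : ℝ := Real.sqrt (1/2 - q) with hs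
      have hρ2 : ρ^2 = u^2+v^2 := Real.sq_sqrt (by positivity)
      have hρpos : 0 < ρ := Real.sqrt_pos.2 (lt_of_le_of_ne (by positivity) (Ne.symm hz0))
      have hq0 : 0 ≤ q := Real.sqrt_nonneg _
      have hq2 : q^2 = 1/4 - (u^2+v^2) := Real.sq_sqrt (by linarith)
      have hqle : q ≤ 1/2 := by nlinarith
      have hc2 : c^2 = 1/2 + q := Real.sq_sqrt (by linarith)
      have hs2 : s^2 = 1/2 - q := Real.sq_sqrt (by linarith)
      have hc0 : 0 ≤ c := Real.sqrt_nonneg _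
      have hs0 : 0 ≤ s := Real.sqrt_nonneg _
      have hcs : c * s = ρ := by
        have h1 : (c*s)^2 = ρ^2 := by rw [mul_pow, hc2, hs2, hρ2]; nlinarith
        nlinarith [mul_nonneg hc0 hs0]
      refine ⟨![(c:ℂ), ((s/ρ : ℝ):ℂ) * ⟨u, v⟩], ?_, ?_⟩
      · apply Complex.ext
        · simp [dotProduct, Fin.sum_univ_two, Complex.add_re, Complex.mul_re, Complex.mul_im]
          field_simp
          linear_combination (ρ^2) * hc2 + (u^2+v^2) * hs2 - (1/2 - q) * hρ2
        · simp [dotProduct, Fin.sum_univ_two, Complex.add_im, Complex.mul_re, Complex.mul_im]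
          ring
      · rw [cyc2_dot]
        apply Complex.ext
        · simp [Complex.add_re, Complex.mul_re, Complex.mul_im, hre]
          field_simp
          linear_combination (-(a+b)*u) * hcs
        · simp [Complex.add_im, Complex.mul_re, Complex.mul_im, him]
          field_simp
          linear_combination (-(a-b)*v) * hcs

theorem stmt10 (a₁ a₂ b₁ b₂ : ℝ) (ha₁ : 0 ≤ a₁) (ha₂ : 0 ≤ a₂)
    (hb₁ : 0 ≤ b₁) (hb₂ : 0 ≤ b₂) :
    numRange (cyc ![(b₁ : ℂ), (b₂ : ℂ)]) ⊆ numRange (cyc ![(a₁ : ℂ), (a₂ : ℂ)]) ↔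
      |b₁ - b₂| ≤ |a₁ - a₂| ∧ b₁ + b₂ ≤ a₁ + a₂ := by
  constructor
  · intro h
    constructor
    · -- use the point ⟨0, (b₁-b₂)/2⟩
      have hmem : (⟨0, (b₁-b₂)*(1/2)⟩ : ℂ) ∈ numRange (cyc ![(b₁:ℂ), b₂]) :=
        (mem_numRange_cyc2 b₁ b₂ _).2 ⟨0, 1/2, by norm_num, by norm_num, by norm_num⟩
      obtain ⟨u, v, huv, hre, him⟩ := (mem_numRange_cyc2 a₁ a₂ _).1 (h hmem)
      simp only [Complex.ofReal_re] at hre him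
      -- him : (b₁-b₂)*(1/2) = (a₁-a₂)*v, v^2 ≤ 1/4
      have hsq : (b₁-b₂)^2 ≤ (a₁-a₂)^2 := by nlinarith [sq_nonneg u, sq_nonneg v]
      calc |b₁ - b₂| = Real.sqrt ((b₁-b₂)^2) := (Real.sqrt_sq_eq_abs _).symm
        _ ≤ Real.sqrt ((a₁-a₂)^2) := Real.sqrt_le_sqrt hsq
        _ = |a₁ - a₂| := Real.sqrt_sq_eq_abs _
    · have hmem : (⟨(b₁+b₂)*(1/2), 0⟩ : ℂ) ∈ numRange (cyc ![(b₁:ℂ), b₂]) :=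
        (mem_numRange_cyc2 b₁ b₂ _).2 ⟨1/2, 0, by norm_num, by norm_num, by norm_num⟩
      obtain ⟨u, v, huv, hre, him⟩ := (mem_numRange_cyc2 a₁ a₂ _).1 (h hmem)
      have hule : u ≤ 1/2 := by nlinarith [sq_nonneg u, sq_nonneg v]
      nlinarith [add_nonneg ha₁ ha₂, mul_le_mul_of_nonneg_left hule (add_nonneg ha₁ ha₂)]
  · rintro ⟨hd, hs⟩ z hz
    obtain ⟨u, v, huv, hre, him⟩ := (mem_numRange_cyc2 b₁ b₂ z).1 hz
    have hd2 : (b₁-b₂)^2 ≤ (a₁-a₂)^2 := by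
      nlinarith [mul_self_le_mul_self (abs_nonneg (b₁-b₂)) hd, sq_abs (b₁-b₂), sq_abs (a₁-a₂)]
    set u' : ℝ := if a₁+a₂ = 0 then 0 else (b₁+b₂)*u/(a₁+a₂) with hu'
    set v' : ℝ := if a₁-a₂ = 0 then 0 else (b₁-b₂)*v/(a₁-a₂) with hv'
    have hu'le : u'^2 ≤ u^2 := by
      rw [hu']
      split_ifs with h
      · simpa using sq_nonneg u
      · have hpos : 0 < a₁+a₂ := lt_of_le_of_ne (by linarith) (Ne.symm h)
        rw [div_pow, div_le_iff₀ (by positivity)]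
        nlinarith [sq_nonneg u, mul_self_le_mul_self (by linarith : (0:ℝ) ≤ b₁+b₂) hs]
    have hv'le : v'^2 ≤ v^2 := by
      rw [hv']
      split_ifs with h
      · simpa using sq_nonneg v
      · have hpos : 0 < (a₁-a₂)^2 := by positivity
        rw [div_pow, div_le_iff₀ hpos]
        nlinarith [sq_nonneg v]
    have hre' : z.re = (a₁+a₂)*u' := by
      rw [hu']
      split_ifs with h
      · have : b₁+b₂ = 0 := by linarith
        rw [hre, this]; ring
      · field_simp [h]; rw [hre]
    have him' : z.im = (a₁-a₂)*v' := by
      rw [hv']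
      split_ifs with h
      · have : b₁-b₂ = 0 := by nlinarith
        rw [him, this]; ring
      · field_simp [h]; rw [him]
    exact (mem_numRange_cyc2 a₁ a₂ z).2 ⟨u', v', by nlinarith, hre', him'⟩
end

section
/- Let R = S(r₁, r₂, r₃, r₄) with r₁, r₂, r₃, r₄ > 0. Then for every θ ∈ ℝ and every z ∈ ℂ, det(zI − 2·Re(e^{iθ}R)) = z⁴ − (r₁² + r₂² + r₃² + r₄²)z² + r₁²r₃² + r₂²r₄² − 2r₁r₂r₃r₄·cos(4θ). -/
open Matrix BigOperators

set_option maxHeartbeats 1000000 in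
lemma det_fin_four' (M : Matrix (Fin 4) (Fin 4) ℂ) :
    M.det =
      M 0 0 * M 1 1 * M 2 2 * M 3 3 - M 0 0 * M 1 1 * M 2 3 * M 3 2 -
      M 0 0 * M 1 2 * M 2 1 * M 3 3 + M 0 0 * M 1 2 * M 2 3 * M 3 1 +
      M 0 0 * M 1 3 * M 2 1 * M 3 2 - M 0 0 * M 1 3 * M 2 2 * M 3 1 -
      M 0 1 * M 1 0 * M 2 2 * M 3 3 + M 0 1 * M 1 0 * M 2 3 * M 3 2 +
      M 0 1 * M 1 2 * M 2 0 * M 3 3 - M 0 1 * M 1 2 * M 2 3 * M 3 0 -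
      M 0 1 * M 1 3 * M 2 0 * M 3 2 + M 0 1 * M 1 3 * M 2 2 * M 3 0 +
      M 0 2 * M 1 0 * M 2 1 * M 3 3 - M 0 2 * M 1 0 * M 2 3 * M 3 1 -
      M 0 2 * M 1 1 * M 2 0 * M 3 3 + M 0 2 * M 1 1 * M 2 3 * M 3 0 +
      M 0 2 * M 1 3 * M 2 0 * M 3 1 - M 0 2 * M 1 3 * M 2 1 * M 3 0 -
      M 0 3 * M 1 0 * M 2 1 * M 3 2 + M 0 3 * M 1 0 * M 2 2 * M 3 1 +
      M 0 3 * M 1 1 * M 2 0 * M 3 2 - M 0 3 * M 1 1 * M 2 2 * M 3 0 -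
      M 0 3 * M 1 2 * M 2 0 * M 3 1 + M 0 3 * M 1 2 * M 2 1 * M 3 0 := by
  simp [Matrix.det_succ_row_zero, Fin.sum_univ_succ, Fin.succAbove]
  ring

theorem stmt12 (r₁ r₂ r₃ r₄ : ℝ) (h₁ : 0 < r₁) (h₂ : 0 < r₂) (h₃ : 0 < r₃) (h₄ : 0 < r₄)
    (θ : ℝ) (z : ℂ) :
    (z • (1 : Matrix (Fin 4) (Fin 4) ℂ)
        - (2 : ℂ) • reT θ (cyc ![(r₁ : ℂ), (r₂ : ℂ), (r₃ : ℂ), (r₄ : ℂ)])).det =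
      z ^ 4 - ((r₁ : ℂ) ^ 2 + (r₂ : ℂ) ^ 2 + (r₃ : ℂ) ^ 2 + (r₄ : ℂ) ^ 2) * z ^ 2
        + (r₁ : ℂ) ^ 2 * (r₃ : ℂ) ^ 2 + (r₂ : ℂ) ^ 2 * (r₄ : ℂ) ^ 2
        - 2 * (r₁ : ℂ) * (r₂ : ℂ) * (r₃ : ℂ) * (r₄ : ℂ) * Real.cos (4 * θ) := by
  set e := Complex.exp (θ * Complex.I) with he
  have hne : e ≠ 0 := Complex.exp_ne_zero _
  have hinv : Complex.exp (-(θ * Complex.I)) = e⁻¹ := by rw [he, ← Complex.exp_neg]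
  have hcos : (Real.cos (4 * θ) : ℂ) = (e ^ 4 + (e⁻¹) ^ 4) / 2 := by
    rw [Complex.ofReal_cos, Complex.cos]
    have h1 : ((4 * θ : ℝ) : ℂ) * Complex.I = (4 : ℕ) * ((θ : ℂ) * Complex.I) := by
      push_cast; ring
    have h2 : -((4 * θ : ℝ) : ℂ) * Complex.I = (4 : ℕ) * (-((θ : ℂ) * Complex.I)) := by
      push_cast; ring
    rw [h1, h2, Complex.exp_nat_mul, Complex.exp_nat_mul, Complex.exp_neg, he]
  have hM : z • (1 : Matrix (Fin 4) (Fin 4) ℂ)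
        - (2 : ℂ) • reT θ (cyc ![(r₁ : ℂ), (r₂ : ℂ), (r₃ : ℂ), (r₄ : ℂ)])
      = !![z, -(e * r₁), 0, -(e⁻¹ * r₄);
           -(e⁻¹ * r₁), z, -(e * r₂), 0;
           0, -(e⁻¹ * r₂), z, -(e * r₃);
           -(e * r₄), 0, -(e⁻¹ * r₃), z] := by
    ext i j
    fin_cases i <;> fin_cases j <;>
      simp [reT, cyc, hinv, ← he, Matrix.one_apply, Complex.conj_ofReal]
  rw [hM, det_fin_four']
  simp only [Matrix.of_apply, Matrix.cons_val', Matrix.cons_val_zero, Matrix.cons_val_one, Matrix.head_cons,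
    Matrix.empty_val', Matrix.cons_val_fin_one, Matrix.head_fin_const, Matrix.cons_val_two,
    Matrix.tail_cons, Matrix.cons_val_three, hcos]
  clear_value e
  have h7 : e ^ 7 * e⁻¹ ^ 7 = 1 := by
    rw [inv_pow, mul_inv_cancel₀ (pow_ne_zero 7 hne)]
  field_simp
  linear_combination 0 * ((z ^ 4 * 2 - z ^ 2 * (r₁^2 + r₂^2 + r₃^2) * 2
    + (r₁:ℂ)^2 * (r₃:ℂ)^2 * 2) * e ^ 7 * h7
    - 2 * (r₁:ℂ) * r₂ * r₃ * r₄ * e ^ 3 * h7 - 2 * (r₁:ℂ) * r₂ * r₃ * r₄ * e ^ 11 * h7)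
end

section
/- Let B = S(b₁, b₂, b₃, b₄, b₅) with b₁, …, b₅ real. Then for every θ ∈ ℝ and every x ∈ ℂ, det(xI − (e^{iθ}B + e^{-iθ}Bᵗ)) = x⁵ − β₂x³ + β₁x − β₀·cos(5θ), where β₂ = b₁² + b₂² + b₃² + b₄² + b₅², β₁ = b₁²b₃² + b₁²b₄² + b₂²b₄² + b₂²b₅² + b₃²b₅², and β₀ = 2b₁b₂b₃b₄b₅. -/
open Matrix BigOperators

set_option maxHeartbeats 1000000 in
theorem stmt15 (b₁ b₂ b₃ b₄ b₅ : ℝ)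
    (B : Matrix (Fin 5) (Fin 5) ℂ)
    (hB : B = cyc ![(b₁ : ℂ), (b₂ : ℂ), (b₃ : ℂ), (b₄ : ℂ), (b₅ : ℂ)])
    (θ : ℝ) (x : ℂ) :
    (x • (1 : Matrix (Fin 5) (Fin 5) ℂ)
        - (Complex.exp (θ * Complex.I) • B + Complex.exp (-(θ * Complex.I)) • Bᵀ)).det =
      x ^ 5 - ((b₁ : ℂ) ^ 2 + (b₂ : ℂ) ^ 2 + (b₃ : ℂ) ^ 2 + (b₄ : ℂ) ^ 2 + (b₅ : ℂ) ^ 2) * x ^ 3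
        + ((b₁ : ℂ) ^ 2 * (b₃ : ℂ) ^ 2 + (b₁ : ℂ) ^ 2 * (b₄ : ℂ) ^ 2 + (b₂ : ℂ) ^ 2 * (b₄ : ℂ) ^ 2
            + (b₂ : ℂ) ^ 2 * (b₅ : ℂ) ^ 2 + (b₃ : ℂ) ^ 2 * (b₅ : ℂ) ^ 2) * x
        - 2 * (b₁ : ℂ) * (b₂ : ℂ) * (b₃ : ℂ) * (b₄ : ℂ) * (b₅ : ℂ) * Real.cos (5 * θ) := by
  set c := Complex.exp (θ * Complex.I) with hc
  set d := Complex.exp (-(θ * Complex.I)) with hd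
  have hcd : c * d = 1 := by
    rw [hc, hd, ← Complex.exp_add]; simp
  have hcos : c ^ 5 + d ^ 5 = 2 * (Real.cos (5 * θ) : ℂ) := by
    have h1 : c ^ 5 = Complex.exp ((5 * θ : ℝ) * Complex.I) := by
      rw [hc, ← Complex.exp_nat_mul]; push_cast; ring_nf
    have h2 : d ^ 5 = Complex.exp (-((5 * θ : ℝ)) * Complex.I) := by
      rw [hd, ← Complex.exp_nat_mul]; push_cast; ring_nf
    rw [h1, h2, ← Complex.two_cos, Complex.ofReal_cos]
  have hM : (x • (1 : Matrix (Fin 5) (Fin 5) ℂ) - (c • B + d • Bᵀ)) =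
      !![x, -(c*b₁), 0, 0, -(d*b₅);
         -(d*b₁), x, -(c*b₂), 0, 0;
         0, -(d*b₂), x, -(c*b₃), 0;
         0, 0, -(d*b₃), x, -(c*b₄);
         -(c*b₅), 0, 0, -(d*b₄), x] := by
    subst hB
    ext i j
    fin_cases i <;> fin_cases j <;>
      simp [cyc, Matrix.one_apply, Matrix.transpose_apply,
        show ((0:Fin 5):ℕ) = 0 from rfl, show ((1:Fin 5):ℕ) = 1 from rfl,
        show ((2:Fin 5):ℕ) = 2 from rfl, show ((3:Fin 5):ℕ) = 3 from rfl,
        show ((4:Fin 5):ℕ) = 4 from rfl] <;> first | rfl | ring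
  rw [hM]
  simp [Matrix.det_succ_row_zero, Fin.sum_univ_succ]; simp [Fin.succAbove, Fin.lt_def, Fin.castSucc, Fin.succ, Fin.castAdd, Fin.castLE]
  have hcos2 : c ^ 5 + d ^ 5 = 2 * Complex.cos ((θ:ℂ) * 5) := by
    rw [hcos, Complex.ofReal_cos]; push_cast; ring_nf
  ring_nf
  linear_combination (x * ((b₁:ℂ)^2*(b₃:ℂ)^2 + (b₁:ℂ)^2*(b₄:ℂ)^2 + (b₂:ℂ)^2*(b₄:ℂ)^2
      + (b₂:ℂ)^2*(b₅:ℂ)^2 + (b₃:ℂ)^2*(b₅:ℂ)^2) * (c*d+1)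
    - x^3 * ((b₁:ℂ)^2 + (b₂:ℂ)^2 + (b₃:ℂ)^2 + (b₄:ℂ)^2 + (b₅:ℂ)^2)) * hcd
    - ((b₁:ℂ)*(b₂:ℂ)*(b₃:ℂ)*(b₄:ℂ)*(b₅:ℂ)) * hcos2
end
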